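/- arXiv:0904.3986 — 7 statements merged into one kernel-verified Lean document; each statement's English description precedes it below -/
import Mathlib

section
/- Let g : ℝ → ℝ be convex, c ∈ ℝ, L ≤ U reals, and let y⁻ ≤ y⁺ be two minimizers of y ↦ c·y + g(y) over ℝ. Define J(x) := min_{u∈[L,U]} ( c·u + g(x+u) ). Then for all x₁ ≤ x₂: (a) if x₁, x₂ ∈ [y⁻ − U, y⁺ − L], then J(x₂) − J(x₁) = −c·(x₂ − x₁); (b) if x₂ ≤ y⁻ − U, then J(x₂) − J(x₁) ≤ −c·(x₂ − x₁); (c) if x₁ ≥ y⁺ − L, then J(x₂) − J(x₁) ≥ −c·(x₂ − x₁). In other words, J has slope exactly −c on the interval [y⁻ − U, y⁺ − L], slope at most −c to its left, and slope at least −c to its right. -/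
/-- property P4: slope of the optimal value function
`J x = min_{u ∈ [L,U]} (c·u + g (x+u))` relative to `-c`, where `y⁻ ≤ y⁺` are
minimizers of `y ↦ c·y + g y`. -/
theorem value_function_slope
    (g : ℝ → ℝ) (hg : ConvexOn ℝ Set.univ g)
    (c L U : ℝ) (hLU : L ≤ U)
    (ym yp : ℝ) (hy : ym ≤ yp)
    (hym : ∀ y : ℝ, c * ym + g ym ≤ c * y + g y)
    (hyp : ∀ y : ℝ, c * yp + g yp ≤ c * y + g y)
    (J : ℝ → ℝ)
    (hJ : ∀ x : ℝ,
      IsLeast { y | ∃ u ∈ Set.Icc L U, y = c * u + g (x + u) } (J x)) :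
    ∀ x1 x2 : ℝ, x1 ≤ x2 →
      ((x1 ∈ Set.Icc (ym - U) (yp - L) ∧ x2 ∈ Set.Icc (ym - U) (yp - L)) →
          J x2 - J x1 = -c * (x2 - x1)) ∧
      (x2 ≤ ym - U → J x2 - J x1 ≤ -c * (x2 - x1)) ∧
      (yp - L ≤ x1 → -c * (x2 - x1) ≤ J x2 - J x1) := by
  -- the convex function f y = c*y + g y
  have hf : ConvexOn ℝ Set.univ (fun y => c * y + g y) := by
    constructor
    · exact convex_univ
    · intro x _ y _ a b ha hb hab
      have h := hg.2 (Set.mem_univ x) (Set.mem_univ y) ha hb hab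
      simp only [smul_eq_mul] at h ⊢
      nlinarith [h]
  -- f is nonincreasing on (-∞, ym]
  have hA : ∀ a b : ℝ, a ≤ b → b ≤ ym → c * b + g b ≤ c * a + g a := by
    intro a b hab hb
    have hseg : b ∈ segment ℝ a ym := by
      rw [segment_eq_Icc (hab.trans hb)]; exact ⟨hab, hb⟩
    have h := hf.le_on_segment (Set.mem_univ a) (Set.mem_univ ym) hseg
    exact h.trans (max_le le_rfl (hym a))
  -- f is nondecreasing on [yp, ∞)
  have hB : ∀ a b : ℝ, yp ≤ a → a ≤ b → c * a + g a ≤ c * b + g b := by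
    intro a b ha hab
    have hseg : a ∈ segment ℝ yp b := by
      rw [segment_eq_Icc (ha.trans hab)]; exact ⟨ha, hab⟩
    have h := hf.le_on_segment (Set.mem_univ yp) (Set.mem_univ b) hseg
    exact h.trans (max_le (hyp b) le_rfl)
  -- f is constant on [ym, yp]
  have hC : ∀ z : ℝ, ym ≤ z → z ≤ yp → c * z + g z = c * ym + g ym := by
    intro z hz1 hz2
    refine le_antisymm ?_ (hym z)
    have hseg : z ∈ segment ℝ ym yp := by
      rw [segment_eq_Icc hy]; exact ⟨hz1, hz2⟩
    have h := hf.le_on_segment (Set.mem_univ ym) (Set.mem_univ yp) hseg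
    exact h.trans (max_le le_rfl (hyp ym))
  -- exact value of J on the middle interval
  have key : ∀ x : ℝ, ym - U ≤ x → x ≤ yp - L → J x = c * ym + g ym - c * x := by
    intro x h1 h2
    have hub := (hJ x).2
    obtain ⟨u, hu, hux⟩ := (hJ x).1
    set y0 : ℝ := max ym (x + L) with hy0
    have hy0L : x + L ≤ y0 := le_max_right _ _
    have hy0U : y0 ≤ x + U := max_le (by linarith) (by linarith)
    have hy0m : ym ≤ y0 := le_max_left _ _
    have hy0p : y0 ≤ yp := max_le (by linarith) (by linarith)
    have hmem : (y0 - x) ∈ Set.Icc L U := ⟨by linarith, by linarith⟩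
    have hle : J x ≤ c * (y0 - x) + g (x + (y0 - x)) :=
      (hJ x).2 ⟨y0 - x, hmem, rfl⟩
    have hxy0 : x + (y0 - x) = y0 := by ring
    rw [hxy0] at hle
    have hval : c * y0 + g y0 = c * ym + g ym := hC y0 hy0m hy0p
    have hge : c * ym + g ym ≤ c * (x + u) + g (x + u) := hym (x + u)
    have : J x = c * (x + u) + g (x + u) - c * x := by rw [hux]; ring
    have hring : c * (y0 - x) = c * y0 - c * x := by ring
    linarith
  intro x1 x2 h12
  refine ⟨?_, ?_, ?_⟩
  · rintro ⟨⟨ha1, ha2⟩, ⟨hb1, hb2⟩⟩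
    rw [key x1 ha1 ha2, key x2 hb1 hb2]; ring
  · intro hx2
    obtain ⟨u1, ⟨hu1L, hu1U⟩, hux1⟩ := (hJ x1).1
    have hle : J x2 ≤ c * U + g (x2 + U) := (hJ x2).2 ⟨U, ⟨hLU, le_rfl⟩, rfl⟩
    have hmono : c * (x2 + U) + g (x2 + U) ≤ c * (x1 + u1) + g (x1 + u1) :=
      hA (x1 + u1) (x2 + U) (by linarith) (by linarith)
    have : J x1 = c * (x1 + u1) + g (x1 + u1) - c * x1 := by rw [hux1]; ring
    linarith
  · intro hx1
    obtain ⟨u2, ⟨hu2L, hu2U⟩, hux2⟩ := (hJ x2).1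
    have hle : J x1 ≤ c * L + g (x1 + L) := (hJ x1).2 ⟨L, ⟨le_rfl, hLU⟩, rfl⟩
    have hmono : c * (x1 + L) + g (x1 + L) ≤ c * (x2 + u2) + g (x2 + u2) :=
      hB (x1 + L) (x2 + u2) (by linarith) (by linarith)
    have : J x2 = c * (x2 + u2) + g (x2 + u2) - c * x2 := by rw [hux2]; ring
    linarith
end

section
/- Fix k ≥ 2, vectors a, b ∈ ℝ^k and scalars a₀, b₀ ∈ ℝ, define π : ℝ^k → ℝ² by π(w) = (a₀ + Σ_{i=1}^k a_i·w_i, b₀ + Σ_{i=1}^k b_i·w_i), and let Θ := π([0,1]^k). Then the set of extreme points of Θ is finite with cardinality at most 2k; moreover its cardinality is strictly less than 2k if and only if there exist indices i ≠ j in {1,…,k} such that the columns (a_i, b_i) and (a_j, b_j) are linearly dependent (equivalently a_i·b_j = a_j·b_i). -/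
/-- The affine projection `π : ℝ^k → ℝ²` defining a zonogon. -/
def zonogonMap (k : ℕ) (a b : Fin k → ℝ) (a0 b0 : ℝ) (w : Fin k → ℝ) : ℝ × ℝ :=
  (a0 + ∑ i, a i * w i, b0 + ∑ i, b i * w i)

/-- The unit hypercube `[0,1]^k ⊂ ℝ^k`. -/
def unitCube (k : ℕ) : Set (Fin k → ℝ) :=
  { w | ∀ i, w i ∈ Set.Icc (0 : ℝ) 1 }

open Set Finset
open scoped Classical

namespace ZonoAux

lemma ncard_image_eq_of_fiber_iff {α β γ : Type*} (f : α → β) (g : α → γ) (s : Set α)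
    (h : ∀ x ∈ s, ∀ y ∈ s, (f x = f y ↔ g x = g y)) :
    (f '' s).ncard = (g '' s).ncard := by
  rcases s.eq_empty_or_nonempty with rfl | ⟨x0, hx0⟩
  · simp
  have : Nonempty α := ⟨x0⟩
  set F : β → γ := fun bb => g (Function.invFunOn f s bb) with hF
  have hFx : ∀ x ∈ s, F (f x) = g x := by
    intro x hx
    have h1 : Function.invFunOn f s (f x) ∈ s := Function.invFunOn_mem ⟨x, hx, rfl⟩
    have h2 : f (Function.invFunOn f s (f x)) = f x := Function.invFunOn_eq ⟨x, hx, rfl⟩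
    exact (h _ h1 _ hx).mp h2
  have himg : F '' (f '' s) = g '' s := by
    ext c
    constructor
    · rintro ⟨bb, ⟨x, hx, rfl⟩, rfl⟩
      exact ⟨x, hx, (hFx x hx).symm⟩
    · rintro ⟨x, hx, rfl⟩
      exact ⟨f x, ⟨x, hx, rfl⟩, hFx x hx⟩
  have hinj : Set.InjOn F (f '' s) := by
    rintro bb ⟨x, hx, rfl⟩ bb' ⟨x', hx', rfl⟩ hFe
    rw [hFx x hx, hFx x' hx'] at hFe
    exact (h _ hx _ hx').mpr hFe
  rw [← himg, Set.ncard_image_of_injOn hinj]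

variable {k : ℕ}

noncomputable def qpat (a b : Fin k → ℝ) (t : ℝ) : Fin k → Bool := fun i => decide (0 < a i * t + b i)

def Tset (a b : Fin k → ℝ) : Set ℝ := {t | ∀ i, a i ≠ 0 → a i * t + b i ≠ 0}

noncomputable def roots (a b : Fin k → ℝ) : Finset ℝ :=
  (Finset.univ.filter fun i => a i ≠ 0).image fun i => -(b i) / a i

lemma root_eq {a b : Fin k → ℝ} {i : Fin k} (hai : a i ≠ 0) (t : ℝ) :
    a i * t + b i = a i * (t - (-(b i) / a i)) := by field_simp; ring

lemma mem_Tset_iff {a b : Fin k → ℝ} {t : ℝ} : t ∈ Tset a b ↔ t ∉ (roots a b : Set ℝ) := by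
  constructor
  · intro ht hmem
    simp only [roots, coe_image, coe_filter, Set.mem_image, Set.mem_setOf_eq] at hmem
    obtain ⟨i, ⟨-, hai⟩, hr⟩ := hmem
    have := ht i hai
    rw [root_eq hai, ← hr] at this
    simp at this
  · intro ht i hai h0
    apply ht
    simp only [roots, coe_image, coe_filter, Set.mem_image, Set.mem_setOf_eq]
    refine ⟨i, ⟨Finset.mem_univ i, hai⟩, ?_⟩
    rw [root_eq hai] at h0
    have : t - (-(b i) / a i) = 0 := by
      rcases mul_eq_zero.mp h0 with h | h
      · exact absurd h hai
      · exact h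
    linarith

lemma sign_iff_of_mul_pos {x y : ℝ} (h : 0 < x * y) : (0 < x ↔ 0 < y) := by
  constructor <;> intro h' <;> nlinarith

lemma sign_flip_of_mul_neg {x y : ℝ} (h : x * y < 0) : (0 < x ↔ 0 < y) → False := by
  intro hiff
  rcases lt_trichotomy x 0 with hx | hx | hx
  · have : ¬ (0 < y) := fun hy => absurd (hiff.mpr hy) (by linarith)
    nlinarith
  · simp [hx] at h
  · nlinarith [hiff.mp hx]

/-- key: for `t ≤ t'` in `T`, patterns agree iff the root-filters agree. -/
lemma qpat_eq_iff_filter_eq {a b : Fin k → ℝ} {t t' : ℝ}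
    (ht : t ∈ Tset a b) (ht' : t' ∈ Tset a b) (hle : t ≤ t') :
    qpat a b t = qpat a b t' ↔
      (roots a b).filter (· < t) = (roots a b).filter (· < t') := by
  constructor
  · intro hq
    ext r
    simp only [Finset.mem_filter, and_congr_right_iff]
    intro hr
    constructor
    · intro h; linarith
    · intro hrt'
      by_contra hrt
      push_neg at hrt
      have htr : t < r := lt_of_le_of_ne hrt (by
        intro h; exact (mem_Tset_iff.mp ht) (h ▸ hr))
      -- r is a root of some i
      simp only [roots, Finset.mem_image, Finset.mem_filter] at hr
      obtain ⟨i, ⟨-, hai⟩, hri⟩ := hr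
      have hx := ht i hai
      have hy := ht' i hai
      have hxe : a i * t + b i = a i * (t - r) := by rw [← hri]; exact root_eq hai t
      have hye : a i * t' + b i = a i * (t' - r) := by rw [← hri]; exact root_eq hai t'
      have hprod : (a i * t + b i) * (a i * t' + b i) < 0 := by
        rw [hxe, hye]
        have h1 : t - r < 0 := by linarith
        have h2 : 0 < t' - r := by linarith
        have hsq : 0 < (a i)^2 := (sq_nonneg (a i)).lt_of_ne (Ne.symm (pow_ne_zero 2 hai))
        have hre : a i * (t - r) * (a i * (t' - r)) = (a i)^2 * ((t - r) * (t' - r)) := by ring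
        rw [hre]
        apply mul_neg_of_pos_of_neg hsq
        exact mul_neg_of_neg_of_pos h1 h2
      have hqi := congrFun hq i
      simp only [qpat, decide_eq_decide] at hqi
      exact sign_flip_of_mul_neg hprod hqi
  · intro hfil
    funext i
    by_cases hai : a i = 0
    · simp [qpat, hai]
    · have hr : (-(b i) / a i) ∈ roots a b :=
        Finset.mem_image.mpr ⟨i, Finset.mem_filter.mpr ⟨Finset.mem_univ i, hai⟩, rfl⟩
      set r := -(b i) / a i with hrdef
      have hnotbetween : ¬ (t < r ∧ r < t') := by
        rintro ⟨h1, h2⟩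
        have hmem : r ∈ (roots a b).filter (· < t') := Finset.mem_filter.mpr ⟨hr, h2⟩
        rw [← hfil] at hmem
        have := (Finset.mem_filter.mp hmem).2
        have this : r < t := this
        linarith
      have hrt : r ≠ t := fun h => (mem_Tset_iff.mp ht) (h ▸ hr)
      have hrt' : r ≠ t' := fun h => (mem_Tset_iff.mp ht') (h ▸ hr)
      have hprod : 0 < (a i * t + b i) * (a i * t' + b i) := by
        rw [root_eq hai t, root_eq hai t', ← hrdef]
        have hcase : (r < t ∧ r < t') ∨ (t < r ∧ t' < r) := by
          rcases lt_or_gt_of_ne hrt with h | h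
          · exact Or.inl ⟨h, by linarith⟩
          · rcases lt_or_gt_of_ne hrt' with h' | h'
            · exact absurd ⟨h, h'⟩ hnotbetween
            · exact Or.inr ⟨h, h'⟩
        have hsq : 0 < (a i)^2 := (sq_nonneg (a i)).lt_of_ne (Ne.symm (pow_ne_zero 2 hai))
        have hre : a i * (t - r) * (a i * (t' - r)) = (a i)^2 * ((t - r) * (t' - r)) := by ring
        rw [hre]
        apply mul_pos hsq
        rcases hcase with ⟨h1, h2⟩ | ⟨h1, h2⟩
        · exact mul_pos (by linarith) (by linarith)
        · exact mul_pos_of_neg_of_neg (by linarith) (by linarith)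
      simp only [qpat, decide_eq_decide]
      exact sign_iff_of_mul_pos hprod

lemma qpat_eq_iff_card_eq {a b : Fin k → ℝ} {t t' : ℝ}
    (ht : t ∈ Tset a b) (ht' : t' ∈ Tset a b) :
    qpat a b t = qpat a b t' ↔
      ((roots a b).filter (· < t)).card = ((roots a b).filter (· < t')).card := by
  rcases le_total t t' with hle | hle
  · rw [qpat_eq_iff_filter_eq ht ht' hle]
    constructor
    · intro h; rw [h]
    · intro h
      apply Finset.eq_of_subset_of_card_le _ (le_of_eq h.symm)
      intro r hrr
      simp only [Finset.mem_filter] at hrr ⊢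
      exact ⟨hrr.1, by linarith [hrr.2]⟩
  · rw [eq_comm, qpat_eq_iff_filter_eq ht' ht hle, eq_comm (a := ((roots a b).filter (· < t)).card)]
    constructor
    · intro h; rw [h]
    · intro h
      apply Finset.eq_of_subset_of_card_le _ (le_of_eq h.symm)
      intro r hrr
      simp only [Finset.mem_filter] at hrr ⊢
      exact ⟨hrr.1, by linarith [hrr.2]⟩

/-- we can cut a finite set of reals at any position, below a bound. -/
lemma exists_cut : ∀ (R : Finset ℝ) (j : ℕ), j ≤ R.card → ∀ U : ℝ, (∀ r ∈ R, r < U) →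
    ∃ t, t ∉ R ∧ t < U ∧ (R.filter (· < t)).card = j := by
  intro R
  induction R using Finset.strongInduction with
  | _ R ih =>
    intro j hj U hU
    rcases eq_or_lt_of_le hj with heq | hlt
    · rcases R.eq_empty_or_nonempty with rfl | hne
      · refine ⟨U - 1, by simp, by linarith, by simpa using heq.symm⟩
      · set M := R.max' hne with hM
        have hMU : M < U := hU M (R.max'_mem hne)
        refine ⟨(M + U) / 2, ?_, by linarith, ?_⟩
        · intro hmem
          have := R.le_max' _ hmem
          linarith
        · have : R.filter (· < (M + U) / 2) = R := by
            apply Finset.filter_true_of_mem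
            intro r hrR
            have := R.le_max' r hrR
            show r < (M + U) / 2
            linarith
          rw [this, heq]
    · have hne : R.Nonempty := by
        rw [← Finset.card_pos]; omega
      set M := R.max' hne with hM
      have hMU : M < U := hU M (R.max'_mem hne)
      obtain ⟨t, htmem, htM, htcard⟩ :=
        ih (R.erase M) (Finset.erase_ssubset (R.max'_mem hne)) j
          (by rw [Finset.card_erase_of_mem (R.max'_mem hne)]; omega) M
          (fun r hr => lt_of_le_of_ne (R.le_max' r (Finset.mem_of_mem_erase hr))
            (Finset.ne_of_mem_erase hr))
      refine ⟨t, ?_, by linarith, ?_⟩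
      · intro htR
        exact htmem (Finset.mem_erase.mpr ⟨by linarith [htM], htR⟩)
      · rw [← htcard, Finset.filter_erase, Finset.erase_eq_of_notMem]
        intro hmem
        have h2 : M < t := by simpa using (Finset.mem_filter.mp hmem).2
        linarith

lemma count_qpat (a b : Fin k → ℝ) :
    ((qpat a b) '' (Tset a b)).ncard = (roots a b).card + 1 := by
  rw [ncard_image_eq_of_fiber_iff (qpat a b)
    (fun t => ((roots a b).filter (· < t)).card) (Tset a b)
    (fun t ht t' ht' => qpat_eq_iff_card_eq ht ht')]
  have himg : (fun t => ((roots a b).filter (· < t)).card) '' (Tset a b)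
      = (Finset.range ((roots a b).card + 1) : Finset ℕ) := by
    ext j
    simp only [Set.mem_image, Finset.coe_range, Set.mem_Iio]
    constructor
    · rintro ⟨t, -, rfl⟩
      have := Finset.card_filter_le (roots a b) (· < t)
      omega
    · intro hj
      obtain ⟨U, hU⟩ : ∃ U : ℝ, ∀ r ∈ roots a b, r < U := by
        rcases (roots a b).eq_empty_or_nonempty with he | hne
        · exact ⟨0, by simp [he]⟩
        · exact ⟨(roots a b).max' hne + 1, fun r hr => by
            linarith [(roots a b).le_max' r hr]⟩
      obtain ⟨t, htR, -, htc⟩ := exists_cut (roots a b) j (by omega) U hU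
      exact ⟨t, mem_Tset_iff.mpr htR, htc⟩
  rw [himg, Set.ncard_coe_finset, Finset.card_range]


noncomputable def npat (a b : Fin k → ℝ) (t : ℝ) : Fin k → Bool :=
  fun i => decide (a i * t + b i < 0)

lemma npat_eq_qpat_neg (a b : Fin k → ℝ) :
    npat a b = qpat (fun i => -(a i)) (fun i => -(b i)) := by
  funext t i
  simp only [npat, qpat, decide_eq_decide]
  constructor <;> intro <;> linarith

lemma Tset_neg (a b : Fin k → ℝ) :
    Tset (fun i => -(a i)) (fun i => -(b i)) = Tset a b := by
  ext t
  simp only [Tset, Set.mem_setOf_eq, neg_ne_zero]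
  constructor <;> intro h i hi <;> have := h i hi <;> intro hc <;> apply this <;> linarith

lemma roots_neg (a b : Fin k → ℝ) :
    roots (fun i => -(a i)) (fun i => -(b i)) = roots a b := by
  unfold roots
  simp only [neg_ne_zero, neg_neg]
  apply Finset.image_congr
  intro i hi
  show b i / -a i = -b i / a i
  rw [div_neg, ← neg_div]

lemma count_npat (a b : Fin k → ℝ) :
    ((npat a b) '' (Tset a b)).ncard = (roots a b).card + 1 := by
  rw [npat_eq_qpat_neg, ← Tset_neg a b, ← roots_neg a b]
  exact count_qpat _ _

noncomputable def Apat (a : Fin k → ℝ) : Fin k → Bool := fun i => decide (a i < 0)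
noncomputable def Bpat (a : Fin k → ℝ) : Fin k → Bool := fun i => decide (0 < a i)

lemma inter_disjoint {a b : Fin k → ℝ} (hinf : ∃ i, a i = 0 ∧ b i ≠ 0) :
    Disjoint ((qpat a b) '' (Tset a b)) ((npat a b) '' (Tset a b)) := by
  rw [Set.disjoint_left]
  rintro p ⟨t, -, rfl⟩ ⟨t', -, hp⟩
  obtain ⟨i, hai, hbi⟩ := hinf
  have h1 := congrFun hp i
  simp only [qpat, npat, hai, zero_mul, zero_add, decide_eq_decide] at h1
  rcases lt_or_gt_of_ne hbi with h | h
  · linarith [h1.mp h]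
  · linarith [h1.mpr h]

lemma qpat_lower {a b : Fin k → ℝ} (hninf : ∀ i, a i = 0 → b i = 0) {t : ℝ}
    (hlow : ∀ r ∈ roots a b, t < r) : qpat a b t = Apat a := by
  funext i
  by_cases hai : a i = 0
  · simp [qpat, Apat, hai, hninf i hai]
  · have hr : (-(b i) / a i) ∈ roots a b :=
      Finset.mem_image.mpr ⟨i, Finset.mem_filter.mpr ⟨Finset.mem_univ i, hai⟩, rfl⟩
    have htr := hlow _ hr
    simp only [qpat, Apat, decide_eq_decide]
    rw [root_eq hai t]
    constructor
    · intro h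
      by_contra hpos
      push_neg at hpos
      rcases lt_or_eq_of_le hpos with h' | h'
      · nlinarith
      · exact hai h'.symm
    · intro h; nlinarith

lemma qpat_upper {a b : Fin k → ℝ} (hninf : ∀ i, a i = 0 → b i = 0) {t : ℝ}
    (hup : ∀ r ∈ roots a b, r < t) : qpat a b t = Bpat a := by
  funext i
  by_cases hai : a i = 0
  · simp [qpat, Bpat, hai, hninf i hai]
  · have hr : (-(b i) / a i) ∈ roots a b :=
      Finset.mem_image.mpr ⟨i, Finset.mem_filter.mpr ⟨Finset.mem_univ i, hai⟩, rfl⟩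
    have htr := hup _ hr
    simp only [qpat, Bpat, decide_eq_decide]
    rw [root_eq hai t]
    constructor
    · intro h
      by_contra hpos
      push_neg at hpos
      rcases lt_or_eq_of_le hpos with h' | h'
      · nlinarith
      · exact hai h'
    · intro h; nlinarith

lemma npat_lower {a b : Fin k → ℝ} (hninf : ∀ i, a i = 0 → b i = 0) {t : ℝ}
    (hlow : ∀ r ∈ roots a b, t < r) : npat a b t = Bpat a := by
  rw [npat_eq_qpat_neg]
  have h1 : qpat (fun i => -(a i)) (fun i => -(b i)) t = Apat (fun i => -(a i)) := by
    apply qpat_lower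
    · intro i hi
      simp only [neg_eq_zero] at hi ⊢
      exact hninf i hi
    · rw [roots_neg]; exact hlow
  rw [h1]
  funext i
  simp only [Apat, Bpat, decide_eq_decide]
  constructor <;> intro <;> linarith

lemma npat_upper {a b : Fin k → ℝ} (hninf : ∀ i, a i = 0 → b i = 0) {t : ℝ}
    (hup : ∀ r ∈ roots a b, r < t) : npat a b t = Apat a := by
  rw [npat_eq_qpat_neg]
  have h1 : qpat (fun i => -(a i)) (fun i => -(b i)) t = Bpat (fun i => -(a i)) := by
    apply qpat_upper
    · intro i hi
      simp only [neg_eq_zero] at hi ⊢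
      exact hninf i hi
    · rw [roots_neg]; exact hup
  rw [h1]
  funext i
  simp only [Apat, Bpat, decide_eq_decide]
  constructor <;> intro <;> linarith

lemma roots_nonempty_of_nz {a b : Fin k → ℝ} (hnz : ∃ i, a i ≠ 0) :
    (roots a b).Nonempty := by
  obtain ⟨i, hi⟩ := hnz
  exact ⟨_, Finset.mem_image.mpr ⟨i, Finset.mem_filter.mpr ⟨Finset.mem_univ i, hi⟩, rfl⟩⟩

lemma low_mem_Tset {a b : Fin k → ℝ} {t : ℝ} (h : ∀ r ∈ roots a b, t < r) : t ∈ Tset a b := by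
  rw [mem_Tset_iff]
  intro hmem
  exact absurd (h t hmem) (lt_irrefl t)

lemma up_mem_Tset {a b : Fin k → ℝ} {t : ℝ} (h : ∀ r ∈ roots a b, r < t) : t ∈ Tset a b := by
  rw [mem_Tset_iff]
  intro hmem
  exact absurd (h t hmem) (lt_irrefl t)

lemma inter_eq_pair {a b : Fin k → ℝ} (hninf : ∀ i, a i = 0 → b i = 0)
    (hnz : ∃ i, a i ≠ 0) :
    ((qpat a b) '' (Tset a b)) ∩ ((npat a b) '' (Tset a b)) = {Apat a, Bpat a} := by
  have hne := roots_nonempty_of_nz (b := b) hnz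
  set lo := (roots a b).min' hne - 1 with hlo
  set hi := (roots a b).max' hne + 1 with hhi
  have hlow : ∀ r ∈ roots a b, lo < r := fun r hr => by
    have := (roots a b).min'_le r hr; simp only [hlo]; linarith
  have hup : ∀ r ∈ roots a b, r < hi := fun r hr => by
    have := (roots a b).le_max' r hr; simp only [hhi]; linarith
  apply Set.Subset.antisymm
  · rintro p ⟨⟨t, ht, rfl⟩, ⟨t', ht', hp⟩⟩
    -- every root lies strictly between t and t'
    have hbet : ∀ i, a i ≠ 0 → ((t < -(b i) / a i ∧ -(b i) / a i < t') ∨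
        (t' < -(b i) / a i ∧ -(b i) / a i < t)) := by
      intro i hai
      have hqi := congrFun hp i
      simp only [qpat, npat, decide_eq_decide] at hqi
      have hx := ht i hai
      have hy := ht' i hai
      set r := -(b i) / a i with hr
      have hxe : a i * t + b i = a i * (t - r) := root_eq hai t
      have hye : a i * t' + b i = a i * (t' - r) := root_eq hai t'
      have hprod : (a i * t + b i) * (a i * t' + b i) < 0 := by
        rcases lt_or_gt_of_ne hx with h | h
        · have hy' : 0 < a i * t' + b i := by
            rcases lt_or_gt_of_ne hy with h' | h'
            · exact absurd (hqi.mp h') (by linarith)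
            · exact h'
          exact mul_neg_of_neg_of_pos h hy'
        · exact mul_neg_of_pos_of_neg h (hqi.mpr h)
      rw [hxe, hye] at hprod
      have hsq : 0 < (a i)^2 := (sq_nonneg (a i)).lt_of_ne (Ne.symm (pow_ne_zero 2 hai))
      have h2 : (t - r) * (t' - r) < 0 := by nlinarith
      rcases lt_trichotomy t r with h3 | h3 | h3
      · left
        refine ⟨h3, ?_⟩
        by_contra hc
        push_neg at hc
        nlinarith
      · exfalso
        apply hx
        rw [hxe, h3]
        ring
      · right
        refine ⟨?_, h3⟩
        by_contra hc
        push_neg at hc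
        nlinarith
    rcases le_or_gt t t' with hle | hlt
    · refine Set.mem_insert_iff.mpr (Or.inl ?_)
      apply qpat_lower hninf
      intro r hr
      simp only [roots, Finset.mem_image, Finset.mem_filter] at hr
      obtain ⟨i, ⟨-, hai⟩, rfl⟩ := hr
      rcases hbet i hai with ⟨h1, h2⟩ | ⟨h1, h2⟩
      · exact h1
      · linarith
    · refine Set.mem_insert_iff.mpr (Or.inr (Set.mem_singleton_iff.mpr ?_))
      apply qpat_upper hninf
      intro r hr
      simp only [roots, Finset.mem_image, Finset.mem_filter] at hr
      obtain ⟨i, ⟨-, hai⟩, rfl⟩ := hr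
      rcases hbet i hai with ⟨h1, h2⟩ | ⟨h1, h2⟩
      · linarith
      · exact h2
  · intro p hp
    rcases hp with rfl | rfl
    · exact ⟨⟨lo, low_mem_Tset hlow, qpat_lower hninf hlow⟩,
        ⟨hi, up_mem_Tset hup, npat_upper hninf hup⟩⟩
    · exact ⟨⟨hi, up_mem_Tset hup, qpat_upper hninf hup⟩,
        ⟨lo, low_mem_Tset hlow, npat_lower hninf hlow⟩⟩

lemma Apat_ne_Bpat {a : Fin k → ℝ} (hnz : ∃ i, a i ≠ 0) : Apat a ≠ Bpat a := by
  obtain ⟨i, hi⟩ := hnz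
  intro h
  have := congrFun h i
  simp only [Apat, Bpat, decide_eq_decide] at this
  rcases lt_or_gt_of_ne hi with h' | h'
  · linarith [this.mp h']
  · linarith [this.mpr h']

/-- the main count of sign patterns -/
lemma count_main (a b : Fin k → ℝ) :
    (((qpat a b) '' (Tset a b)) ∪ ((npat a b) '' (Tset a b))).ncard =
      if ∃ i, a i = 0 ∧ b i ≠ 0 then 2 * (roots a b).card + 2
      else if ∃ i, a i ≠ 0 then 2 * (roots a b).card
      else 1 := by
  have hfq : ((qpat a b) '' (Tset a b)).Finite := Set.toFinite _
  have hfn : ((npat a b) '' (Tset a b)).Finite := Set.toFinite _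
  by_cases hinf : ∃ i, a i = 0 ∧ b i ≠ 0
  · rw [if_pos hinf, Set.ncard_union_eq (inter_disjoint hinf) hfq hfn,
      count_qpat, count_npat]
    ring
  · rw [if_neg hinf]
    push_neg at hinf
    by_cases hnz : ∃ i, a i ≠ 0
    · rw [if_pos hnz]
      have h2 := Set.ncard_union_add_ncard_inter _ _ hfq hfn
      rw [count_qpat, count_npat, inter_eq_pair hinf hnz,
        Set.ncard_pair (Apat_ne_Bpat hnz)] at h2
      omega
    · rw [if_neg hnz]
      push_neg at hnz
      have hT : (0:ℝ) ∈ Tset a b := by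
        intro i hi
        exact absurd (hnz i) hi
      have hq : (qpat a b) '' (Tset a b) = {fun _ => false} := by
        apply Set.Subset.antisymm
        · rintro p ⟨t, -, rfl⟩
          funext i
          simp [qpat, hnz i, hinf i (hnz i)]
        · rintro p rfl
          refine ⟨0, hT, ?_⟩
          funext i
          simp [qpat, hnz i, hinf i (hnz i)]
      have hn : (npat a b) '' (Tset a b) = {fun _ => false} := by
        apply Set.Subset.antisymm
        · rintro p ⟨t, -, rfl⟩
          funext i
          simp [npat, hnz i, hinf i (hnz i)]
        · rintro p rfl
          refine ⟨0, hT, ?_⟩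
          funext i
          simp [npat, hnz i, hinf i (hnz i)]
      rw [hq, hn, Set.union_self, Set.ncard_singleton]

end ZonoAux

namespace ZonoGeo

variable {k : ℕ}

def ip (a b : Fin k → ℝ) (i : Fin k) (u : ℝ × ℝ) : ℝ := a i * u.1 + b i * u.2

def Sdir (a b : Fin k → ℝ) : Set (ℝ × ℝ) :=
  {u | ∀ i, ¬(a i = 0 ∧ b i = 0) → ip a b i u ≠ 0}

noncomputable def sgn (a b : Fin k → ℝ) (u : ℝ × ℝ) : Fin k → Bool :=
  fun i => decide (0 < ip a b i u)

noncomputable def ind (s : Fin k → Bool) : Fin k → ℝ := fun i => if s i then 1 else 0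

noncomputable def vpt (a b : Fin k → ℝ) (a0 b0 : ℝ) (s : Fin k → Bool) : ℝ × ℝ :=
  zonogonMap k a b a0 b0 (ind s)

def fdir (u x : ℝ × ℝ) : ℝ := x.1 * u.1 + x.2 * u.2

lemma ind_mem_unitCube (s : Fin k → Bool) : ind s ∈ unitCube k := by
  intro i
  by_cases h : s i <;> simp [ind, h, Set.mem_Icc] <;> norm_num

lemma fdir_zono (a b : Fin k → ℝ) (a0 b0 : ℝ) (w : Fin k → ℝ) (u : ℝ × ℝ) :
    fdir u (zonogonMap k a b a0 b0 w) = (a0 * u.1 + b0 * u.2) + ∑ i, w i * ip a b i u := by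
  simp only [fdir, zonogonMap, ip]
  have h : ∑ i, w i * (a i * u.1 + b i * u.2)
      = (∑ i, a i * w i) * u.1 + (∑ i, b i * w i) * u.2 := by
    rw [Finset.sum_mul, Finset.sum_mul, ← Finset.sum_add_distrib]
    exact Finset.sum_congr rfl fun i _ => by ring
  rw [h]; ring

lemma ip_zero {a b : Fin k → ℝ} {i : Fin k} (h : a i = 0 ∧ b i = 0) (u : ℝ × ℝ) :
    ip a b i u = 0 := by simp [ip, h.1, h.2]

lemma sgn_true {a b : Fin k → ℝ} {u : ℝ × ℝ} {i : Fin k} (h : sgn a b u i = true) :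
    0 < ip a b i u := by simpa [sgn] using h

lemma sgn_false {a b : Fin k → ℝ} {u : ℝ × ℝ} {i : Fin k} (h : sgn a b u i = false) :
    ¬ 0 < ip a b i u := by simpa [sgn] using h

lemma term_le {a b : Fin k → ℝ} {u : ℝ × ℝ} {w : Fin k → ℝ} (hw : w ∈ unitCube k) (i : Fin k) :
    w i * ip a b i u ≤ ind (sgn a b u) i * ip a b i u := by
  cases hs : sgn a b u i
  · simp only [ind, hs, Bool.false_eq_true, if_false, zero_mul]
    have h := sgn_false hs
    exact mul_nonpos_of_nonneg_of_nonpos (hw i).1 (not_lt.mp h)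
  · simp only [ind, hs, if_true, one_mul]
    exact mul_le_of_le_one_left (sgn_true hs).le (hw i).2

lemma le_max_pt (a b : Fin k → ℝ) (a0 b0 : ℝ) (u : ℝ × ℝ) {w : Fin k → ℝ}
    (hw : w ∈ unitCube k) :
    fdir u (zonogonMap k a b a0 b0 w) ≤ fdir u (vpt a b a0 b0 (sgn a b u)) := by
  rw [vpt, fdir_zono, fdir_zono]
  exact add_le_add le_rfl (Finset.sum_le_sum fun i _ => term_le hw i)

lemma le_max_pt' (a b : Fin k → ℝ) (a0 b0 : ℝ) (u : ℝ × ℝ) {x : ℝ × ℝ}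
    (hx : x ∈ zonogonMap k a b a0 b0 '' unitCube k) :
    fdir u x ≤ fdir u (vpt a b a0 b0 (sgn a b u)) := by
  obtain ⟨w, hw, rfl⟩ := hx
  exact le_max_pt a b a0 b0 u hw

lemma eq_max_pt (a b : Fin k → ℝ) (a0 b0 : ℝ) {u : ℝ × ℝ} (hu : u ∈ Sdir a b)
    {w : Fin k → ℝ} (hw : w ∈ unitCube k)
    (heq : fdir u (zonogonMap k a b a0 b0 w) = fdir u (vpt a b a0 b0 (sgn a b u))) :
    zonogonMap k a b a0 b0 w = vpt a b a0 b0 (sgn a b u) := by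
  rw [vpt, fdir_zono, fdir_zono] at heq
  have hsums : ∑ i, w i * ip a b i u = ∑ i, ind (sgn a b u) i * ip a b i u :=
    add_left_cancel heq
  have hterm : ∀ i ∈ Finset.univ, w i * ip a b i u = ind (sgn a b u) i * ip a b i u :=
    (Finset.sum_eq_sum_iff_of_le (f := fun i => w i * ip a b i u)
      (g := fun i => ind (sgn a b u) i * ip a b i u) fun i _ => term_le hw i).mp hsums
  have hco : ∀ i, a i * w i = a i * ind (sgn a b u) i ∧
      b i * w i = b i * ind (sgn a b u) i := by
    intro i
    by_cases hz : a i = 0 ∧ b i = 0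
    · rw [hz.1, hz.2]; simp
    · have hip := hu i hz
      have hwi : w i = ind (sgn a b u) i :=
        mul_right_cancel₀ hip (hterm i (Finset.mem_univ i))
      rw [hwi]; exact ⟨rfl, rfl⟩
  have h1 : ∑ i, a i * w i = ∑ i, a i * ind (sgn a b u) i :=
    Finset.sum_congr rfl fun i _ => (hco i).1
  have h2 : ∑ i, b i * w i = ∑ i, b i * ind (sgn a b u) i :=
    Finset.sum_congr rfl fun i _ => (hco i).2
  unfold vpt zonogonMap
  rw [h1, h2]

lemma vpt_mem (a b : Fin k → ℝ) (a0 b0 : ℝ) (s : Fin k → Bool) :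
    vpt a b a0 b0 s ∈ zonogonMap k a b a0 b0 '' unitCube k :=
  ⟨ind s, ind_mem_unitCube s, rfl⟩

lemma fdir_comb (u y₁ y₂ : ℝ × ℝ) (c₁ c₂ : ℝ) :
    fdir u (c₁ • y₁ + c₂ • y₂) = c₁ * fdir u y₁ + c₂ * fdir u y₂ := by
  simp only [fdir, Prod.fst_add, Prod.snd_add, Prod.smul_fst, Prod.smul_snd, smul_eq_mul]
  ring

lemma vpt_extreme (a b : Fin k → ℝ) (a0 b0 : ℝ) {u : ℝ × ℝ} (hu : u ∈ Sdir a b) :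
    vpt a b a0 b0 (sgn a b u) ∈
      Set.extremePoints ℝ (zonogonMap k a b a0 b0 '' unitCube k) := by
  rw [mem_extremePoints_iff_forall_segment]
  refine ⟨vpt_mem a b a0 b0 _, ?_⟩
  intro x₁ hx₁ x₂ hx₂ hseg
  obtain ⟨c₁, c₂, hc₁, hc₂, hsum, hxx⟩ := hseg
  have hM1 := le_max_pt' a b a0 b0 u hx₁
  have hM2 := le_max_pt' a b a0 b0 u hx₂
  have hMeq : c₁ * fdir u x₁ + c₂ * fdir u x₂ = fdir u (vpt a b a0 b0 (sgn a b u)) := by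
    rw [← fdir_comb, hxx]
  rcases eq_or_lt_of_le hc₁ with hc0 | hcpos
  · right
    rw [← hc0, zero_smul, zero_add] at hxx
    have : c₂ = 1 := by linarith
    rw [this, one_smul] at hxx
    exact hxx
  rcases eq_or_lt_of_le hc₂ with hc0' | hcpos'
  · left
    rw [← hc0', zero_smul, add_zero] at hxx
    have : c₁ = 1 := by linarith
    rw [this, one_smul] at hxx
    exact hxx
  · left
    have hf1 : fdir u x₁ = fdir u (vpt a b a0 b0 (sgn a b u)) := by
      by_contra hne
      have h1 : fdir u x₁ < fdir u (vpt a b a0 b0 (sgn a b u)) := lt_of_le_of_ne hM1 hne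
      have hM : c₁ * fdir u (vpt a b a0 b0 (sgn a b u)) + c₂ * fdir u (vpt a b a0 b0 (sgn a b u))
          = fdir u (vpt a b a0 b0 (sgn a b u)) := by rw [← add_mul, hsum, one_mul]
      linarith [mul_lt_mul_of_pos_left h1 hcpos, mul_le_mul_of_nonneg_left hM2 hc₂]
    obtain ⟨w₁, hw₁, rfl⟩ := hx₁
    exact eq_max_pt a b a0 b0 hu hw₁ hf1

lemma term_le' {a b : Fin k → ℝ} {u u' : ℝ × ℝ} (hu : u ∈ Sdir a b)
    (i : Fin k) :
    ind (sgn a b u') i * ip a b i u ≤ ind (sgn a b u) i * ip a b i u := by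
  cases h1 : sgn a b u i <;> cases h2 : sgn a b u' i <;>
    simp only [ind, h1, h2, Bool.false_eq_true, if_false, if_true, one_mul, zero_mul, le_refl]
  · -- sgn u i = false, sgn u' i = true : ip a b i u < 0
    have hip' : 0 < ip a b i u' := sgn_true h2
    have hnz : ¬(a i = 0 ∧ b i = 0) := fun hz => by
      rw [ip_zero hz u'] at hip'; exact lt_irrefl _ hip'
    have hnee := hu i hnz
    have : ip a b i u < 0 := lt_of_le_of_ne (not_lt.mp (sgn_false h1)) hnee
    linarith
  · exact (sgn_true h1).le

lemma term_lt' {a b : Fin k → ℝ} {u u' : ℝ × ℝ} (hu : u ∈ Sdir a b)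
    {i : Fin k} (hne : sgn a b u i ≠ sgn a b u' i) :
    ind (sgn a b u') i * ip a b i u < ind (sgn a b u) i * ip a b i u := by
  cases h1 : sgn a b u i <;> cases h2 : sgn a b u' i <;>
    rw [h1, h2] at hne <;>
    simp only [ind, h1, h2, Bool.false_eq_true, if_false, if_true, one_mul, zero_mul]
  · exact absurd rfl hne
  · have hip' : 0 < ip a b i u' := sgn_true h2
    have hnz : ¬(a i = 0 ∧ b i = 0) := fun hz => by
      rw [ip_zero hz u'] at hip'; exact lt_irrefl _ hip'
    exact lt_of_le_of_ne (not_lt.mp (sgn_false h1)) (hu i hnz)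
  · exact sgn_true h1
  · exact absurd rfl hne

lemma sgn_inj (a b : Fin k → ℝ) (a0 b0 : ℝ) {u u' : ℝ × ℝ}
    (hu : u ∈ Sdir a b) (hu' : u' ∈ Sdir a b)
    (hv : vpt a b a0 b0 (sgn a b u) = vpt a b a0 b0 (sgn a b u')) :
    sgn a b u = sgn a b u' := by
  by_contra hne
  obtain ⟨i0, hi0⟩ : ∃ i, sgn a b u i ≠ sgn a b u' i := by
    by_contra hc
    push_neg at hc
    exact hne (funext hc)
  have hlt : fdir u (vpt a b a0 b0 (sgn a b u')) < fdir u (vpt a b a0 b0 (sgn a b u)) := by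
    rw [vpt, vpt, fdir_zono, fdir_zono]
    apply add_lt_add_of_le_of_lt le_rfl
    apply Finset.sum_lt_sum (fun i _ => term_le' hu i)
      ⟨i0, Finset.mem_univ i0, term_lt' hu hi0⟩
  rw [hv] at hlt
  exact lt_irrefl _ hlt


def corners (k : ℕ) : Set (Fin k → ℝ) := Set.pi Set.univ (fun _ => ({0, 1} : Set ℝ))

noncomputable def zonoAff (a b : Fin k → ℝ) (a0 b0 : ℝ) : (Fin k → ℝ) →ᵃ[ℝ] ℝ × ℝ where
  toFun := zonogonMap k a b a0 b0
  linear :=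
    { toFun := fun w => (∑ i, a i * w i, ∑ i, b i * w i)
      map_add' := fun w w' => by
        have h1 : ∑ i, a i * (w + w') i = (∑ i, a i * w i) + ∑ i, a i * w' i := by
          rw [← Finset.sum_add_distrib]
          exact Finset.sum_congr rfl fun i _ => by simp [mul_add]
        have h2 : ∑ i, b i * (w + w') i = (∑ i, b i * w i) + ∑ i, b i * w' i := by
          rw [← Finset.sum_add_distrib]
          exact Finset.sum_congr rfl fun i _ => by simp [mul_add]
        simp only [h1, h2, Prod.mk_add_mk]
      map_smul' := fun c w => by
        have h1 : ∑ i, a i * (c • w) i = c * ∑ i, a i * w i := by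
          rw [Finset.mul_sum]
          exact Finset.sum_congr rfl fun i _ => by simp [smul_eq_mul]; ring
        have h2 : ∑ i, b i * (c • w) i = c * ∑ i, b i * w i := by
          rw [Finset.mul_sum]
          exact Finset.sum_congr rfl fun i _ => by simp [smul_eq_mul]; ring
        simp only [h1, h2, RingHom.id_apply, Prod.smul_mk, smul_eq_mul] }
  map_vadd' := fun p v => by
    simp only [zonogonMap, LinearMap.coe_mk, AddHom.coe_mk, vadd_eq_add, Prod.mk.injEq,
      Prod.mk_add_mk]
    have h1 : ∑ i, a i * (v + p) i = (∑ i, a i * v i) + ∑ i, a i * p i := by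
      rw [← Finset.sum_add_distrib]
      exact Finset.sum_congr rfl fun i _ => by simp [mul_add]
    have h2 : ∑ i, b i * (v + p) i = (∑ i, b i * v i) + ∑ i, b i * p i := by
      rw [← Finset.sum_add_distrib]
      exact Finset.sum_congr rfl fun i _ => by simp [mul_add]
    rw [h1, h2]
    constructor <;> ring

lemma theta_eq (a b : Fin k → ℝ) (a0 b0 : ℝ) :
    zonogonMap k a b a0 b0 '' unitCube k
      = convexHull ℝ (zonogonMap k a b a0 b0 '' corners k) := by
  have hcube : unitCube k = convexHull ℝ (corners k) := by
    rw [corners, convexHull_pi]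
    ext w
    simp only [unitCube, Set.mem_setOf_eq, Set.mem_pi, Set.mem_univ, true_implies]
    apply forall_congr'
    intro i
    rw [convexHull_pair, segment_eq_Icc zero_le_one]
  have hco : zonogonMap k a b a0 b0 = ⇑(zonoAff a b a0 b0) := rfl
  rw [hcube, hco, AffineMap.image_convexHull]

lemma corners_finite (k : ℕ) : (corners k).Finite :=
  Set.Finite.pi fun _ => (Set.finite_singleton 1).insert 0

lemma exists_good_t (a b : Fin k → ℝ) : ∃ t : ℝ, ∀ i, a i ≠ 0 → a i * t + b i ≠ 0 := by
  obtain ⟨t, ht⟩ := Infinite.exists_notMem_finset (Finset.univ.image fun i => -(b i) / a i)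
  refine ⟨t, fun i hai h0 => ht ?_⟩
  refine Finset.mem_image.mpr ⟨i, Finset.mem_univ i, ?_⟩
  rw [div_eq_iff hai]
  linarith

lemma Sdir_nonempty (a b : Fin k → ℝ) : (Sdir a b).Nonempty := by
  obtain ⟨t, ht⟩ := exists_good_t a b
  refine ⟨(t, 1), fun i hi => ?_⟩
  simp only [ip]
  by_cases hai : a i = 0
  · have hbi : b i ≠ 0 := fun h => hi ⟨hai, h⟩
    simpa [hai] using hbi
  · have := ht i hai
    simpa using this

lemma fdir_linear (u : ℝ × ℝ) : IsLinearMap ℝ (fdir u) := by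
  constructor
  · intro p q; simp only [fdir, Prod.fst_add, Prod.snd_add]; ring
  · intro c p; simp only [fdir, Prod.smul_fst, Prod.smul_snd, smul_eq_mul]; ring

lemma fdir_addsmul (u₀ w : ℝ × ℝ) (t : ℝ) (y : ℝ × ℝ) :
    fdir (u₀ + t • w) y = fdir u₀ y + t * fdir w y := by
  simp only [fdir, Prod.fst_add, Prod.snd_add, Prod.smul_fst, Prod.smul_snd, smul_eq_mul]
  ring

lemma ip_addsmul (a b : Fin k → ℝ) (i : Fin k) (u₀ w : ℝ × ℝ) (t : ℝ) :
    ip a b i (u₀ + t • w) = ip a b i u₀ + t * ip a b i w := by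
  simp only [ip, Prod.fst_add, Prod.snd_add, Prod.smul_fst, Prod.smul_snd, smul_eq_mul]
  ring

lemma cover (a b : Fin k → ℝ) (a0 b0 : ℝ) {x : ℝ × ℝ}
    (hx : x ∈ Set.extremePoints ℝ (zonogonMap k a b a0 b0 '' unitCube k)) :
    ∃ u ∈ Sdir a b, x = vpt a b a0 b0 (sgn a b u) := by
  have hΘ := theta_eq a b a0 b0
  set Θ := zonogonMap k a b a0 b0 '' unitCube k with hΘdef
  set F := zonogonMap k a b a0 b0 '' corners k with hFdef
  have hxΘ : x ∈ Θ := hx.1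
  have hconv : Convex ℝ Θ := hΘ ▸ convex_convexHull ℝ _
  have hxdiff : x ∉ convexHull ℝ (Θ \ {x}) :=
    (Set.mem_diff _ |>.mp (hconv.mem_extremePoints_iff_mem_diff_convexHull_diff.mp hx)).2
  have hFfin : F.Finite := (corners_finite k).image _
  have hFΘ : F ⊆ Θ := hΘ ▸ subset_convexHull ℝ F
  have hxG : x ∉ convexHull ℝ (F \ {x}) := fun hmem =>
    hxdiff (convexHull_mono (Set.diff_subset_diff_left hFΘ) hmem)
  rcases Set.eq_empty_or_nonempty (F \ {x}) with hGe | hGne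
  · obtain ⟨u, hu⟩ := Sdir_nonempty a b
    have hF1 : F ⊆ {x} := by rwa [Set.diff_eq_empty] at hGe
    have hΘ1 : Θ ⊆ {x} := by
      rw [hΘ]
      exact convexHull_min hF1 (convex_singleton x)
    have hv := hΘ1 (vpt_mem a b a0 b0 (sgn a b u))
    exact ⟨u, hu, (Set.mem_singleton_iff.mp hv).symm⟩
  · have hGfin : (F \ {x}).Finite := hFfin.diff
    obtain ⟨f, c, hfy, hfx⟩ := geometric_hahn_banach_closed_point
      (convex_convexHull ℝ (F \ {x})) (hGfin.isCompact_convexHull ℝ).isClosed hxG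
    set u₀ : ℝ × ℝ := (f (1, 0), f (0, 1)) with hu₀
    have hfu : ∀ y : ℝ × ℝ, f y = fdir u₀ y := by
      intro y
      have hy : y = y.1 • ((1:ℝ), (0:ℝ)) + y.2 • ((0:ℝ), (1:ℝ)) := by
        simp [Prod.ext_iff]
      conv_lhs => rw [hy]
      rw [map_add, map_smul, map_smul]
      simp [fdir, hu₀, smul_eq_mul]
    have hstrict0 : ∀ y ∈ F \ {x}, fdir u₀ y < fdir u₀ x := by
      intro y hy
      have h1 := hfy y (subset_convexHull ℝ _ hy)
      rw [hfu y] at h1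
      rw [hfu x] at hfx
      linarith
    obtain ⟨y₀, hy₀⟩ := hGne
    have hu0ne : u₀ ≠ 0 := by
      intro h0
      have := hstrict0 y₀ hy₀
      rw [h0] at this
      simp [fdir] at this
    set w : ℝ × ℝ := (-u₀.2, u₀.1) with hwdef
    have hrot : ∀ i, ¬(a i = 0 ∧ b i = 0) → ¬(ip a b i u₀ = 0 ∧ ip a b i w = 0) := by
      rintro i hi ⟨h1, h2⟩
      apply hi
      have hne01 : u₀.1 ≠ 0 ∨ u₀.2 ≠ 0 := by
        by_contra hc
        push_neg at hc
        exact hu0ne (Prod.ext_iff.mpr ⟨by simpa using hc.1, by simpa using hc.2⟩)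
      have hs : 0 < u₀.1 ^ 2 + u₀.2 ^ 2 := by
        rcases hne01 with h | h
        · have : 0 < u₀.1 ^ 2 := (sq_nonneg _).lt_of_ne (Ne.symm (pow_ne_zero 2 h))
          linarith [sq_nonneg u₀.2]
        · have : 0 < u₀.2 ^ 2 := (sq_nonneg _).lt_of_ne (Ne.symm (pow_ne_zero 2 h))
          linarith [sq_nonneg u₀.1]
      simp only [ip, hwdef] at h1 h2
      constructor
      · have ha : a i * (u₀.1 ^ 2 + u₀.2 ^ 2) = 0 := by linear_combination u₀.1 * h1 - u₀.2 * h2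
        rcases mul_eq_zero.mp ha with h | h
        · exact h
        · linarith
      · have hb : b i * (u₀.1 ^ 2 + u₀.2 ^ 2) = 0 := by linear_combination u₀.2 * h1 + u₀.1 * h2
        rcases mul_eq_zero.mp hb with h | h
        · exact h
        · linarith
    set badT : Finset ℝ := Finset.univ.image (fun i => -(ip a b i u₀) / (ip a b i w)) with hbadT
    have hGfs : (F \ {x}).Finite := hGfin
    set Gfs := hGfs.toFinset with hGfsdef
    have hGfsne : Gfs.Nonempty := ⟨y₀, hGfs.mem_toFinset.mpr hy₀⟩
    set ε := Gfs.inf' hGfsne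
      (fun y => (fdir u₀ x - fdir u₀ y) / (|fdir w y - fdir w x| + 1)) with hεdef
    have hεpos : 0 < ε := by
      rw [hεdef, Finset.lt_inf'_iff]
      intro y hy
      have hyG := hGfs.mem_toFinset.mp hy
      exact div_pos (sub_pos.mpr (hstrict0 y hyG)) (by positivity)
    obtain ⟨t, htmem⟩ := ((Set.Ioo_infinite hεpos).diff badT.finite_toSet).nonempty
    obtain ⟨htI, htB⟩ := htmem
    set u := u₀ + t • w with hudef
    have huS : u ∈ Sdir a b := by
      intro i hi
      rw [hudef, ip_addsmul]
      by_cases hw0 : ip a b i w = 0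
      · rw [hw0, mul_zero, add_zero]
        exact fun h => (hrot i hi) ⟨h, hw0⟩
      · intro h0
        apply htB
        refine Finset.mem_image.mpr ⟨i, Finset.mem_univ i, ?_⟩
        rw [div_eq_iff hw0]
        linarith
    have hstrict : ∀ y ∈ F, y ≠ x → fdir u y < fdir u x := by
      intro y hyF hyne
      have hyG : y ∈ F \ {x} := ⟨hyF, hyne⟩
      have h1 : fdir u₀ y < fdir u₀ x := hstrict0 y hyG
      have hεle : ε ≤ (fdir u₀ x - fdir u₀ y) / (|fdir w y - fdir w x| + 1) :=
        Finset.inf'_le _ (hGfs.mem_toFinset.mpr hyG)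
      have hpos1 : (0:ℝ) < |fdir w y - fdir w x| + 1 := by positivity
      have h3 : ε * (|fdir w y - fdir w x| + 1) ≤ fdir u₀ x - fdir u₀ y :=
        (le_div_iff₀ hpos1).mp hεle
      have habs : t * (fdir w y - fdir w x) ≤ t * |fdir w y - fdir w x| :=
        mul_le_mul_of_nonneg_left (le_abs_self _) htI.1.le
      have h2 : t * (|fdir w y - fdir w x| + 1) < ε * (|fdir w y - fdir w x| + 1) :=
        mul_lt_mul_of_pos_right htI.2 hpos1
      rw [hudef, fdir_addsmul, fdir_addsmul]
      have hexp : t * (|fdir w y - fdir w x| + 1) = t * |fdir w y - fdir w x| + t := by ring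
      have habs' : t * fdir w y - t * fdir w x ≤ t * |fdir w y - fdir w x| := by
        rw [← mul_sub]; exact habs
      linarith [htI.1]
    have hmax : ∀ z ∈ Θ, fdir u z ≤ fdir u x := by
      have hhalf : Θ ⊆ {z | fdir u z ≤ fdir u x} := by
        rw [hΘ]
        apply convexHull_min _ (convex_halfSpace_le (fdir_linear u) _)
        intro y hyF
        by_cases hyx : y = x
        · exact le_of_eq (congrArg (fdir u) hyx)
        · exact le_of_lt (hstrict y hyF hyx)
      exact fun z hz => hhalf hz
    have h1 : fdir u (vpt a b a0 b0 (sgn a b u)) ≤ fdir u x :=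
      hmax _ (vpt_mem a b a0 b0 (sgn a b u))
    have h2 : fdir u x ≤ fdir u (vpt a b a0 b0 (sgn a b u)) := le_max_pt' a b a0 b0 u hxΘ
    obtain ⟨wx, hwx, rfl⟩ := hxΘ
    exact ⟨u, huS, eq_max_pt a b a0 b0 huS hwx (le_antisymm h2 h1)⟩

end ZonoGeo

namespace ZonoBridge
open ZonoAux ZonoGeo

variable {k : ℕ}

lemma pos_mul_iff_pos_right {c x : ℝ} (hc : 0 < c) : 0 < x * c ↔ 0 < x := by
  constructor <;> intro h <;> nlinarith

lemma pos_mul_iff_neg_right {c x : ℝ} (hc : c < 0) : 0 < x * c ↔ x < 0 := by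
  constructor <;> intro h <;> nlinarith

lemma large_sign {aa bb t : ℝ} (ha : aa ≠ 0) (hb : |bb / aa| < t) :
    (0 < aa * t + bb ↔ 0 < aa) ∧ aa * t + bb ≠ 0 := by
  have h1 : -(bb / aa) ≤ |bb / aa| := neg_le_abs _
  have h2 : bb / aa ≤ |bb / aa| := le_abs_self _
  have hba : (bb / aa) * aa = bb := div_mul_cancel₀ bb ha
  rcases lt_or_gt_of_ne ha with hneg | hpos
  · have hlt : aa * t + bb < 0 := by
      nlinarith [mul_neg_of_neg_of_pos hneg (show (0:ℝ) < t + bb / aa by linarith)]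
    exact ⟨⟨fun h => absurd h (by linarith), fun h => absurd h (by linarith)⟩, ne_of_lt hlt⟩
  · have hgt : 0 < aa * t + bb := by
      nlinarith [mul_pos hpos (show (0:ℝ) < t + bb / aa by linarith)]
    exact ⟨⟨fun _ => hpos, fun _ => hgt⟩, ne_of_gt hgt⟩

lemma extreme_eq (a b : Fin k → ℝ) (a0 b0 : ℝ) :
    Set.extremePoints ℝ (zonogonMap k a b a0 b0 '' unitCube k)
      = vpt a b a0 b0 '' (sgn a b '' Sdir a b) := by
  apply Set.Subset.antisymm
  · intro x hx
    obtain ⟨u, hu, rfl⟩ := cover a b a0 b0 hx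
    exact ⟨sgn a b u, ⟨u, hu, rfl⟩, rfl⟩
  · rintro x ⟨s, ⟨u, hu, rfl⟩, rfl⟩
    exact vpt_extreme a b a0 b0 hu

lemma ncard_extreme (a b : Fin k → ℝ) (a0 b0 : ℝ) :
    (Set.extremePoints ℝ (zonogonMap k a b a0 b0 '' unitCube k)).ncard
      = (sgn a b '' Sdir a b).ncard := by
  rw [extreme_eq a b a0 b0]
  apply Set.ncard_image_of_injOn
  rintro s ⟨u, hu, rfl⟩ s' ⟨u', hu', rfl⟩ h
  exact sgn_inj a b a0 b0 hu hu' h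

lemma sgn_image_eq (a b : Fin k → ℝ) :
    sgn a b '' Sdir a b
      = (qpat a b '' Tset a b) ∪ (npat a b '' Tset a b) := by
  apply Set.Subset.antisymm
  · rintro p ⟨u, hu, rfl⟩
    rcases lt_trichotomy u.2 0 with h2 | h2 | h2
    · right
      have hkey : ∀ i, (a i * (u.1 / u.2) + b i) * u.2 = ip a b i u := by
        intro i
        have hu2 : u.2 ≠ 0 := ne_of_lt h2
        simp only [ip]
        field_simp
      refine ⟨u.1 / u.2, ?_, ?_⟩
      · intro i hai
        have hip := hu i (fun hz => hai hz.1)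
        intro h0
        have := hkey i
        rw [h0, zero_mul] at this
        exact hip this.symm
      · funext i
        simp only [npat, sgn, decide_eq_decide]
        rw [← hkey i]
        exact (pos_mul_iff_neg_right h2).symm
    · -- u.2 = 0
      by_cases h1 : u.1 = 0
      · have hz : ∀ i, a i = 0 ∧ b i = 0 := by
          intro i
          by_contra hc
          exact hu i hc (by simp [ip, h1, h2])
        left
        refine ⟨0, fun i hai => absurd (hz i).1 hai, ?_⟩
        funext i
        simp [qpat, sgn, ip, (hz i).1, (hz i).2]
      · have hzero : ∀ i, a i = 0 → b i = 0 := by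
          intro i hai
          by_contra hbi
          exact hu i (fun hzz => hbi hzz.2) (by simp [ip, hai, h2])
        set t := 1 + ∑ i, |b i / a i| with ht
        have htpos : ∀ i, a i ≠ 0 → |b i / a i| < t := by
          intro i _
          rw [ht]
          have hle : |b i / a i| ≤ ∑ j, |b j / a j| :=
            Finset.single_le_sum (f := fun j => |b j / a j|) (fun j _ => abs_nonneg _)
              (Finset.mem_univ i)
          linarith
        rcases lt_or_gt_of_ne h1 with hneg | hpos
        · right
          refine ⟨t, fun i hai => (large_sign hai (htpos i hai)).2, ?_⟩
          funext i
          simp only [npat, sgn, decide_eq_decide, ip, h2, mul_zero, add_zero]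
          by_cases hai : a i = 0
          · simp [hai, hzero i hai]
          · obtain ⟨hiff, hne0⟩ := large_sign hai (htpos i hai)
            constructor
            · intro h
              have hai_neg : a i < 0 := by
                rcases lt_or_gt_of_ne hai with h' | h'
                · exact h'
                · exact absurd (hiff.mpr h') (by linarith)
              nlinarith
            · intro h
              have hai_neg : a i < 0 := by nlinarith
              rcases lt_or_gt_of_ne hne0 with h' | h'
              · exact h'
              · exact absurd (hiff.mp h') (by linarith)
        · left
          refine ⟨t, fun i hai => (large_sign hai (htpos i hai)).2, ?_⟩
          funext i
          simp only [qpat, sgn, decide_eq_decide, ip, h2, mul_zero, add_zero]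
          by_cases hai : a i = 0
          · simp [hai, hzero i hai]
          · obtain ⟨hiff, hne0⟩ := large_sign hai (htpos i hai)
            rw [hiff]
            constructor
            · intro h; nlinarith
            · intro h; nlinarith
    · left
      have hkey : ∀ i, (a i * (u.1 / u.2) + b i) * u.2 = ip a b i u := by
        intro i
        have hu2 : u.2 ≠ 0 := ne_of_gt h2
        simp only [ip]
        field_simp
      refine ⟨u.1 / u.2, ?_, ?_⟩
      · intro i hai
        have hip := hu i (fun hz => hai hz.1)
        intro h0
        have := hkey i
        rw [h0, zero_mul] at this
        exact hip this.symm
      · funext i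
        simp only [qpat, sgn, decide_eq_decide]
        rw [← hkey i]
        exact (pos_mul_iff_pos_right h2).symm
  · rintro p (⟨t, ht, rfl⟩ | ⟨t, ht, rfl⟩)
    · refine ⟨(t, 1), ?_, ?_⟩
      · intro i hnz
        simp only [ip]
        by_cases hai : a i = 0
        · have hbi : b i ≠ 0 := fun h => hnz ⟨hai, h⟩
          simpa [hai] using hbi
        · simpa using ht i hai
      · funext i
        simp only [sgn, qpat, decide_eq_decide, ip]
        norm_num
    · refine ⟨(-t, -1), ?_, ?_⟩
      · intro i hnz
        simp only [ip]
        by_cases hai : a i = 0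
        · have hbi : b i ≠ 0 := fun h => hnz ⟨hai, h⟩
          simp only [hai, zero_mul, zero_add, mul_neg_one]
          simpa using hbi
        · have hne := ht i hai
          intro h0
          apply hne
          simp only [mul_neg_one] at h0
          linarith
      · funext i
        simp only [sgn, npat, decide_eq_decide, ip]
        exact decide_eq_decide.mpr (by constructor <;> intro <;> nlinarith)

lemma image_dup {s : Finset (Fin k)} {f : Fin k → ℝ} {i j : Fin k} (hi : i ∈ s) (hj : j ∈ s)
    (hne : i ≠ j) (heq : f i = f j) : (s.image f).card ≤ s.card - 1 := by
  have himg : s.image f = (s.erase j).image f := by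
    apply Finset.Subset.antisymm ?_ (Finset.image_subset_image (Finset.erase_subset j s))
    intro r hr
    obtain ⟨l, hl, rfl⟩ := Finset.mem_image.mp hr
    by_cases hlj : l = j
    · exact Finset.mem_image.mpr ⟨i, Finset.mem_erase.mpr ⟨hne, hi⟩, by rw [heq, hlj]⟩
    · exact Finset.mem_image.mpr ⟨l, Finset.mem_erase.mpr ⟨hlj, hl⟩, rfl⟩
  calc (s.image f).card = ((s.erase j).image f).card := by rw [himg]
  _ ≤ (s.erase j).card := Finset.card_image_le
  _ = s.card - 1 := Finset.card_erase_of_mem hj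

end ZonoBridge

/-- a zonogon with `k ≥ 2` generators has at most `2k` vertices,
with strict inequality iff two of its generators are linearly dependent. -/
theorem zonogon_vertex_count
    (k : ℕ) (hk : 2 ≤ k) (a b : Fin k → ℝ) (a0 b0 : ℝ) :
    (Set.extremePoints ℝ (zonogonMap k a b a0 b0 '' unitCube k)).Finite ∧
    (Set.extremePoints ℝ (zonogonMap k a b a0 b0 '' unitCube k)).ncard ≤ 2 * k ∧
    ((Set.extremePoints ℝ (zonogonMap k a b a0 b0 '' unitCube k)).ncard < 2 * k ↔
      ∃ i j : Fin k, i ≠ j ∧ a i * b j = a j * b i) := by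
  classical
  have hfin : (Set.extremePoints ℝ (zonogonMap k a b a0 b0 '' unitCube k)).Finite := by
    rw [ZonoBridge.extreme_eq a b a0 b0]
    exact (Set.toFinite _).image _
  have hcard : (Set.extremePoints ℝ (zonogonMap k a b a0 b0 '' unitCube k)).ncard
      = if ∃ i, a i = 0 ∧ b i ≠ 0 then 2 * (ZonoAux.roots a b).card + 2
        else if ∃ i, a i ≠ 0 then 2 * (ZonoAux.roots a b).card else 1 := by
    rw [ZonoBridge.ncard_extreme a b a0 b0, ZonoBridge.sgn_image_eq, ZonoAux.count_main]
  set N := (Set.extremePoints ℝ (zonogonMap k a b a0 b0 '' unitCube k)).ncard with hN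
  set m₀ := (ZonoAux.roots a b).card with hm₀
  set K1 := (Finset.univ.filter fun i : Fin k => a i ≠ 0) with hK1
  have hm0k1 : m₀ ≤ K1.card := Finset.card_image_le
  have hk1k : K1.card ≤ k := le_trans (Finset.card_filter_le _ _) (by simp)
  -- a zero generator makes any other index a dependent partner
  have hzero_dep : ∀ i : Fin k, a i = 0 → b i = 0 →
      ∃ i' j' : Fin k, i' ≠ j' ∧ a i' * b j' = a j' * b i' := by
    intro i hai hbi
    have h2 : 1 < Fintype.card (Fin k) := by simp; omega
    obtain ⟨j, hj⟩ := Fintype.exists_ne_of_one_lt_card h2 i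
    exact ⟨i, j, fun h => hj h.symm, by rw [hai, hbi]; ring⟩
  -- two a-zero indices are dependent
  have htwo_dep : ∀ i j : Fin k, i ≠ j → a i = 0 → a j = 0 →
      ∃ i' j' : Fin k, i' ≠ j' ∧ a i' * b j' = a j' * b i' :=
    fun i j hne hai haj => ⟨i, j, hne, by rw [hai, haj]; ring⟩
  -- equal roots from dependence
  have hroot_eq : ∀ i j : Fin k, a i ≠ 0 → a j ≠ 0 → a i * b j = a j * b i →
      -(b i) / a i = -(b j) / a j := by
    intro i j hai haj hdep
    rw [div_eq_div_iff hai haj]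
    linarith
  refine ⟨hfin, ?_, ?_⟩
  · -- N ≤ 2k
    by_cases hinf : ∃ i, a i = 0 ∧ b i ≠ 0
    · obtain ⟨i₀, hai₀, hbi₀⟩ := hinf
      have hk1 : K1.card ≤ k - 1 := by
        have hsub : K1 ⊆ Finset.univ.erase i₀ := by
          intro j hj
          refine Finset.mem_erase.mpr ⟨?_, Finset.mem_univ j⟩
          intro h
          exact (Finset.mem_filter.mp hj).2 (h ▸ hai₀)
        calc K1.card ≤ (Finset.univ.erase i₀).card := Finset.card_le_card hsub
        _ = k - 1 := by rw [Finset.card_erase_of_mem (Finset.mem_univ i₀)]; simp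
      rw [hcard, if_pos ⟨i₀, hai₀, hbi₀⟩]
      omega
    · rw [hcard, if_neg hinf]
      by_cases hnz : ∃ i, a i ≠ 0
      · rw [if_pos hnz]; omega
      · rw [if_neg hnz]; omega
  · constructor
    · -- N < 2k → dependent pair
      intro hlt
      by_contra hdep
      push_neg at hdep
      -- no zero generators
      have hnozero : ∀ i : Fin k, ¬(a i = 0 ∧ b i = 0) := by
        rintro i ⟨hai, hbi⟩
        obtain ⟨i', j', hne, h⟩ := hzero_dep i hai hbi
        exact hdep i' j' hne h
      -- roots are injective on K1
      have hinj : Set.InjOn (fun i => -(b i) / a i) K1 := by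
        intro i hi j hj hij
        by_contra hne
        have hai := (Finset.mem_filter.mp hi).2
        have haj := (Finset.mem_filter.mp hj).2
        apply hdep i j hne
        have := (div_eq_div_iff hai haj).mp hij
        linarith
      have hm0 : m₀ = K1.card := Finset.card_image_of_injOn hinj
      by_cases hinf : ∃ i, a i = 0 ∧ b i ≠ 0
      · obtain ⟨i₀, hai₀, hbi₀⟩ := hinf
        have hK1eq : K1 = Finset.univ.erase i₀ := by
          ext j
          simp only [hK1, Finset.mem_filter, Finset.mem_univ, true_and, Finset.mem_erase,
            and_true]
          constructor
          · intro h hji₀; exact h (hji₀ ▸ hai₀)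
          · intro hne
            by_contra haj
            obtain ⟨i', j', hne', h⟩ := htwo_dep j i₀ hne haj hai₀
            exact hdep i' j' hne' h
        have hcardK1 : K1.card = k - 1 := by
          rw [hK1eq, Finset.card_erase_of_mem (Finset.mem_univ i₀)]; simp
        have hNval : N = 2 * m₀ + 2 := by rw [hcard, if_pos ⟨i₀, hai₀, hbi₀⟩]
        omega
      · have hallnz : ∀ i, a i ≠ 0 := by
          intro i hai
          by_contra _
          exact hnozero i ⟨hai, by
            by_contra hbi
            exact hinf ⟨i, hai, hbi⟩⟩
        have hcardK1 : K1.card = k := by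
          rw [hK1, Finset.filter_true_of_mem (fun i _ => hallnz i)]
          simp
        have hNval : N = 2 * m₀ := by
          rw [hcard, if_neg hinf, if_pos ⟨Fin.mk 0 (by omega), hallnz _⟩]
        omega
    · -- dependent pair → N < 2k
      rintro ⟨i, j, hne, hdep⟩
      by_cases hinf : ∃ i, a i = 0 ∧ b i ≠ 0
      · obtain ⟨i₀, hai₀, hbi₀⟩ := hinf
        -- show m₀ ≤ k - 2
        have hm2 : m₀ ≤ k - 2 := by
          by_cases hai : a i = 0
          · -- then a j = 0 too (via dep) or i is zero/inf type; in all cases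
            -- two indices outside K1 or i₀-related; handle: a i = 0.
            by_cases haj : a j = 0
            · -- both i j outside K1
              have hsub : K1 ⊆ (Finset.univ.erase i).erase j := by
                intro l hl
                have hal := (Finset.mem_filter.mp hl).2
                refine Finset.mem_erase.mpr ⟨fun h => hal (h ▸ haj), ?_⟩
                exact Finset.mem_erase.mpr ⟨fun h => hal (h ▸ hai), Finset.mem_univ l⟩
              have : K1.card ≤ k - 2 := by
                calc K1.card ≤ ((Finset.univ.erase i).erase j).card :=
                  Finset.card_le_card hsub
                _ = (Finset.univ.erase i).card - 1 := by
                  rw [Finset.card_erase_of_mem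
                    (Finset.mem_erase.mpr ⟨hne.symm, Finset.mem_univ j⟩)]
                _ ≤ k - 2 := by
                  rw [Finset.card_erase_of_mem (Finset.mem_univ i)]
                  simp
                  omega
              omega
            · -- a j ≠ 0 : dep gives a j * b i = 0 so b i = 0, i is zero generator
              have hbi : b i = 0 := by
                have : a j * b i = 0 := by rw [← hdep, hai]; ring
                rcases mul_eq_zero.mp this with h | h
                · exact absurd h haj
                · exact h
              -- i zero gen: i ∉ K1 and i ≠ i₀, i₀ ∉ K1
              have hii₀ : i ≠ i₀ := fun h => hbi₀ (h ▸ hbi)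
              have hsub : K1 ⊆ (Finset.univ.erase i).erase i₀ := by
                intro l hl
                have hal := (Finset.mem_filter.mp hl).2
                refine Finset.mem_erase.mpr ⟨fun h => hal (h ▸ hai₀), ?_⟩
                exact Finset.mem_erase.mpr ⟨fun h => hal (h ▸ hai), Finset.mem_univ l⟩
              have : K1.card ≤ k - 2 := by
                calc K1.card ≤ ((Finset.univ.erase i).erase i₀).card :=
                  Finset.card_le_card hsub
                _ = (Finset.univ.erase i).card - 1 := by
                  rw [Finset.card_erase_of_mem
                    (Finset.mem_erase.mpr ⟨hii₀.symm, Finset.mem_univ i₀⟩)]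
                _ ≤ k - 2 := by
                  rw [Finset.card_erase_of_mem (Finset.mem_univ i)]
                  simp
                  omega
              omega
          · by_cases haj : a j = 0
            · -- symmetric: b j = 0
              have hbj : b j = 0 := by
                have : a i * b j = 0 := by rw [hdep, haj]; ring
                rcases mul_eq_zero.mp this with h | h
                · exact absurd h hai
                · exact h
              have hji₀ : j ≠ i₀ := fun h => hbi₀ (h ▸ hbj)
              have hsub : K1 ⊆ (Finset.univ.erase j).erase i₀ := by
                intro l hl
                have hal := (Finset.mem_filter.mp hl).2
                refine Finset.mem_erase.mpr ⟨fun h => hal (h ▸ hai₀), ?_⟩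
                exact Finset.mem_erase.mpr ⟨fun h => hal (h ▸ haj), Finset.mem_univ l⟩
              have : K1.card ≤ k - 2 := by
                calc K1.card ≤ ((Finset.univ.erase j).erase i₀).card :=
                  Finset.card_le_card hsub
                _ = (Finset.univ.erase j).card - 1 := by
                  rw [Finset.card_erase_of_mem
                    (Finset.mem_erase.mpr ⟨hji₀.symm, Finset.mem_univ i₀⟩)]
                _ ≤ k - 2 := by
                  rw [Finset.card_erase_of_mem (Finset.mem_univ j)]
                  simp
                  omega
              omega
            · -- both nonzero: equal roots, image loses one; and K1 misses i₀
              have hroots : -(b i) / a i = -(b j) / a j := hroot_eq i j hai haj hdep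
              have hiK1 : i ∈ K1 := Finset.mem_filter.mpr ⟨Finset.mem_univ i, hai⟩
              have hjK1 : j ∈ K1 := Finset.mem_filter.mpr ⟨Finset.mem_univ j, haj⟩
              have hm1 : m₀ ≤ K1.card - 1 :=
                ZonoBridge.image_dup hiK1 hjK1 hne hroots
              have hk1 : K1.card ≤ k - 1 := by
                have hsub : K1 ⊆ Finset.univ.erase i₀ := by
                  intro l hl
                  have hal := (Finset.mem_filter.mp hl).2
                  exact Finset.mem_erase.mpr ⟨fun h => hal (h ▸ hai₀), Finset.mem_univ l⟩
                calc K1.card ≤ (Finset.univ.erase i₀).card := Finset.card_le_card hsub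
                _ ≤ k - 1 := by
                  rw [Finset.card_erase_of_mem (Finset.mem_univ i₀)]
                  simp
              omega
        have hNval : N = 2 * m₀ + 2 := by rw [hcard, if_pos ⟨i₀, hai₀, hbi₀⟩]
        omega
      · by_cases hnz : ∃ i, a i ≠ 0
        · -- N = 2 m₀, show m₀ < k
          have hm1 : m₀ ≤ k - 1 := by
            by_cases hai : a i = 0
            · have hk1 : K1.card ≤ k - 1 := by
                have hsub : K1 ⊆ Finset.univ.erase i := by
                  intro l hl
                  have hal := (Finset.mem_filter.mp hl).2
                  exact Finset.mem_erase.mpr ⟨fun h => hal (h ▸ hai), Finset.mem_univ l⟩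
                calc K1.card ≤ (Finset.univ.erase i).card := Finset.card_le_card hsub
                _ ≤ k - 1 := by rw [Finset.card_erase_of_mem (Finset.mem_univ i)]; simp
              omega
            · by_cases haj : a j = 0
              · have hk1 : K1.card ≤ k - 1 := by
                  have hsub : K1 ⊆ Finset.univ.erase j := by
                    intro l hl
                    have hal := (Finset.mem_filter.mp hl).2
                    exact Finset.mem_erase.mpr ⟨fun h => hal (h ▸ haj), Finset.mem_univ l⟩
                  calc K1.card ≤ (Finset.univ.erase j).card := Finset.card_le_card hsub
                  _ ≤ k - 1 := by rw [Finset.card_erase_of_mem (Finset.mem_univ j)]; simp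
                omega
              · have hroots : -(b i) / a i = -(b j) / a j := hroot_eq i j hai haj hdep
                have hiK1 : i ∈ K1 := Finset.mem_filter.mpr ⟨Finset.mem_univ i, hai⟩
                have hjK1 : j ∈ K1 := Finset.mem_filter.mpr ⟨Finset.mem_univ j, haj⟩
                have hm1 : m₀ ≤ K1.card - 1 :=
                  ZonoBridge.image_dup (f := fun l => -(b l) / a l) hiK1 hjK1 hne hroots
                omega
          have hNval : N = 2 * m₀ := by rw [hcard, if_neg hinf, if_pos hnz]
          omega
        · have hNval : N = 1 := by rw [hcard, if_neg hinf, if_neg hnz]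
          omega
end

section
/- Fix k ∈ ℕ, vectors a, b ∈ ℝ^k and scalars a₀, b₀ ∈ ℝ, define π : ℝ^k → ℝ² by π(w) = (a₀ + Σ_{i=1}^k a_i·w_i, b₀ + Σ_{i=1}^k b_i·w_i), and let Θ := π([0,1]^k). If w₁, w₂ ∈ [0,1]^k with w₁ ≠ w₂ satisfy π(w₁) = π(w₂) and this common image is an extreme point of Θ, then there exists an index j ∈ {1,…,k} with a_j = 0 and b_j = 0. -/
lemma sum_update_mul (k : ℕ) (a m : Fin k → ℝ) (j : Fin k) (x : ℝ) :
    ∑ i, a i * Function.update m j x i = (∑ i, a i * m i) + a j * (x - m j) := by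
  have h : ∀ i ∈ Finset.univ, a i * Function.update m j x i
      = a i * m i + (if i = j then a j * (x - m j) else 0) := by
    intro i _
    by_cases hij : i = j
    · subst hij; simp [Function.update_self]; ring
    · simp [Function.update_of_ne hij, hij]
  rw [Finset.sum_congr rfl h, Finset.sum_add_distrib, Finset.sum_ite_eq' Finset.univ j]
  simp

/-- if two distinct points of the hypercube project to the same
vertex (extreme point) of the zonogon, then some generator is zero. -/
theorem zonogon_vertex_unique_preimage
    (k : ℕ) (a b : Fin k → ℝ) (a0 b0 : ℝ)
    (w1 w2 : Fin k → ℝ) (hw1 : w1 ∈ unitCube k) (hw2 : w2 ∈ unitCube k)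
    (hne : w1 ≠ w2)
    (heq : zonogonMap k a b a0 b0 w1 = zonogonMap k a b a0 b0 w2)
    (hext : zonogonMap k a b a0 b0 w1 ∈
      Set.extremePoints ℝ (zonogonMap k a b a0 b0 '' unitCube k)) :
    ∃ j : Fin k, a j = 0 ∧ b j = 0 := by
  obtain ⟨j, hj⟩ : ∃ j, w1 j ≠ w2 j := by
    by_contra h
    push_neg at h
    exact hne (funext h)
  refine ⟨j, ?_⟩
  set m : Fin k → ℝ := fun i => (w1 i + w2 i) / 2 with hm_def
  have hm : m ∈ unitCube k := by
    intro i
    obtain ⟨h1, h2⟩ := hw1 i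
    obtain ⟨h3, h4⟩ := hw2 i
    constructor <;> simp only [hm_def] <;> nlinarith
  have heq1 : (∑ i, a i * w1 i) = ∑ i, a i * w2 i := by
    have := congrArg Prod.fst heq
    simpa [zonogonMap] using this
  have heq2 : (∑ i, b i * w1 i) = ∑ i, b i * w2 i := by
    have := congrArg Prod.snd heq
    simpa [zonogonMap] using this
  have hsa : (∑ i, a i * m i) = ∑ i, a i * w1 i := by
    have h : ∀ i ∈ Finset.univ, a i * m i = (a i * w1 i + a i * w2 i) / 2 := by
      intro i _; simp only [hm_def]; ring
    rw [Finset.sum_congr rfl h, ← Finset.sum_div, Finset.sum_add_distrib, ← heq1]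
    ring
  have hsb : (∑ i, b i * m i) = ∑ i, b i * w1 i := by
    have h : ∀ i ∈ Finset.univ, b i * m i = (b i * w1 i + b i * w2 i) / 2 := by
      intro i _; simp only [hm_def]; ring
    rw [Finset.sum_congr rfl h, ← Finset.sum_div, Finset.sum_add_distrib, ← heq2]
    ring
  -- m j is strictly between 0 and 1
  have hmj0 : 0 < m j := by
    obtain ⟨h1, h2⟩ := hw1 j
    obtain ⟨h3, h4⟩ := hw2 j
    simp only [hm_def]
    rcases lt_or_gt_of_ne hj with h | h <;> nlinarith
  have hmj1 : m j < 1 := by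
    obtain ⟨h1, h2⟩ := hw1 j
    obtain ⟨h3, h4⟩ := hw2 j
    simp only [hm_def]
    rcases lt_or_gt_of_ne hj with h | h <;> nlinarith
  set t : ℝ := min (m j) (1 - m j) with ht_def
  have ht : 0 < t := lt_min hmj0 (by linarith)
  have htm : t ≤ m j := min_le_left _ _
  have htm' : t ≤ 1 - m j := min_le_right _ _
  -- perturbed points
  set mp : Fin k → ℝ := Function.update m j (m j + t) with hmp_def
  set mm : Fin k → ℝ := Function.update m j (m j - t) with hmm_def
  have hmp : mp ∈ unitCube k := by
    intro i
    by_cases hij : i = j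
    · subst hij
      simp only [hmp_def, Function.update_self]
      constructor <;> [linarith; linarith]
    · simp only [hmp_def, Function.update_of_ne hij]
      exact hm i
  have hmm : mm ∈ unitCube k := by
    intro i
    by_cases hij : i = j
    · subst hij
      simp only [hmm_def, Function.update_self]
      constructor <;> [linarith; linarith]
    · simp only [hmm_def, Function.update_of_ne hij]
      exact hm i
  set p := zonogonMap k a b a0 b0 w1 with hp_def
  have hπp : zonogonMap k a b a0 b0 mp = (p.1 + t * a j, p.2 + t * b j) := by
    simp only [zonogonMap, hmp_def, sum_update_mul, hsa, hsb, hp_def]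
    rw [Prod.mk.injEq]
    constructor <;> ring
  have hπm : zonogonMap k a b a0 b0 mm = (p.1 - t * a j, p.2 - t * b j) := by
    simp only [zonogonMap, hmm_def, sum_update_mul, hsa, hsb, hp_def]
    rw [Prod.mk.injEq]
    constructor <;> ring
  obtain ⟨hpmem, hK⟩ := hext
  have h1 : (p.1 - t * a j, p.2 - t * b j) ∈ zonogonMap k a b a0 b0 '' unitCube k :=
    ⟨mm, hmm, hπm⟩
  have h2 : (p.1 + t * a j, p.2 + t * b j) ∈ zonogonMap k a b a0 b0 '' unitCube k :=
    ⟨mp, hmp, hπp⟩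
  have hseg : p ∈ openSegment ℝ ((p.1 - t * a j, p.2 - t * b j) : ℝ × ℝ)
      (p.1 + t * a j, p.2 + t * b j) := by
    refine ⟨1/2, 1/2, by norm_num, by norm_num, by norm_num, ?_⟩
    simp [Prod.ext_iff, Prod.smul_def]
    constructor <;> ring
  have := hK h1 h2 hseg
  have h3 := this
  rw [Prod.ext_iff] at h3
  constructor
  · have h0 : t * a j = 0 := by have h := h3.1; simp only at h; linarith
    exact (mul_eq_zero.mp h0).resolve_left (ne_of_gt ht)
  · have h0 : t * b j = 0 := by have h := h3.2; simp only at h; linarith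
    exact (mul_eq_zero.mp h0).resolve_left (ne_of_gt ht)
end

section
/- Fix k ∈ ℕ, vectors a, b ∈ ℝ^k and scalars a₀, b₀ ∈ ℝ, define π : ℝ^k → ℝ² by π(w) = (a₀ + Σ_{i=1}^k a_i·w_i, b₀ + Σ_{i=1}^k b_i·w_i), and assume b_i > 0 for every i and a₁/b₁ > a₂/b₂ > … > a_k/b_k. Then the k+1 points P_j := (a₀ + Σ_{i=1}^j a_i, b₀ + Σ_{i=1}^j b_i), j = 0, 1, …, k, are pairwise distinct extreme points of the zonogon Θ := π([0,1]^k). -/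
/-- for sorted positive generators (`b i > 0`,
`a 1 / b 1 > … > a k / b k`), the partial-sum points
`P j = (a0 + Σ_{i≤j} a i, b0 + Σ_{i≤j} b i)`, `j = 0,…,k`, are pairwise
distinct extreme points of the zonogon `π([0,1]^k)`. -/
theorem rightside_points_are_vertices
    (k : ℕ) (a b : ℕ → ℝ) (a0 b0 : ℝ)
    (hb : ∀ i, 1 ≤ i → i ≤ k → 0 < b i)
    (hsort : ∀ i j, 1 ≤ i → i < j → j ≤ k → a j / b j < a i / b i) :
    (∀ s t, s ≤ k → t ≤ k → s ≠ t →
      ((a0 + ∑ i ∈ Finset.Icc 1 s, a i, b0 + ∑ i ∈ Finset.Icc 1 s, b i) : ℝ × ℝ)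
        ≠ (a0 + ∑ i ∈ Finset.Icc 1 t, a i, b0 + ∑ i ∈ Finset.Icc 1 t, b i)) ∧
    (∀ j, j ≤ k →
      ((a0 + ∑ i ∈ Finset.Icc 1 j, a i, b0 + ∑ i ∈ Finset.Icc 1 j, b i) : ℝ × ℝ)
        ∈ Set.extremePoints ℝ
          ((fun w : ℕ → ℝ =>
              ((a0 + ∑ i ∈ Finset.Icc 1 k, a i * w i,
                b0 + ∑ i ∈ Finset.Icc 1 k, b i * w i) : ℝ × ℝ)) ''
            { w | ∀ i, 1 ≤ i → i ≤ k → w i ∈ Set.Icc (0 : ℝ) 1 })) := by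
  constructor
  · -- distinctness: the second coordinates are strictly increasing
    have key : ∀ s t : ℕ, s < t → t ≤ k →
        (∑ i ∈ Finset.Icc 1 s, b i) < ∑ i ∈ Finset.Icc 1 t, b i := by
      intro s t hst ht
      refine Finset.sum_lt_sum_of_subset (Finset.Icc_subset_Icc_right hst.le)
        (i := t) (Finset.mem_Icc.mpr ⟨by omega, le_rfl⟩)
        (by simp [Finset.mem_Icc]; omega) (hb t (by omega) ht) ?_
      intro i hi _
      exact (hb i (Finset.mem_Icc.mp hi).1 (le_trans (Finset.mem_Icc.mp hi).2 ht)).le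
    intro s t hs ht hst heq
    have h2 := congrArg Prod.snd heq
    simp only at h2
    rcases hst.lt_or_gt with h | h
    · have := key s t h ht; linarith
    · have := key t s h hs; linarith
  · intro j hj
    -- choose a separating slope c
    have hmono : ∀ i i' : ℕ, 1 ≤ i → i ≤ i' → i' ≤ k → a i' / b i' ≤ a i / b i := by
      intro i i' h1 h2 h3
      rcases eq_or_lt_of_le h2 with h | h
      · subst h; exact le_rfl
      · exact (hsort i i' h1 h h3).le
    obtain ⟨c, hc1, hc2⟩ : ∃ c : ℝ, (∀ i, 1 ≤ i → i ≤ j → c < a i / b i) ∧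
        (∀ i, j < i → i ≤ k → a i / b i < c) := by
      rcases Nat.eq_zero_or_pos j with hj0 | hj1
      · subst hj0
        rcases Nat.eq_zero_or_pos k with hk0 | hk1
        · exact ⟨0, fun i h1 h2 => by omega, fun i h1 h2 => by omega⟩
        · refine ⟨a 1 / b 1 + 1, fun i h1 h2 => by omega, fun i h1 h2 => ?_⟩
          have := hmono 1 i le_rfl h1 h2
          linarith
      · rcases eq_or_lt_of_le hj with hjk | hjk
        · refine ⟨a k / b k - 1, fun i h1 h2 => ?_, fun i h1 h2 => by omega⟩
          have := hmono i k h1 (by omega) le_rfl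
          linarith
        · have hlt : a (j+1) / b (j+1) < a j / b j := hsort j (j+1) hj1 (Nat.lt_succ_self j) hjk
          refine ⟨(a j / b j + a (j+1) / b (j+1)) / 2, fun i h1 h2 => ?_, fun i h1 h2 => ?_⟩
          · have := hmono i j h1 h2 hj
            linarith
          · have := hmono (j+1) i (by omega) (by omega) h2
            linarith
    classical
    set χ : ℕ → ℝ := fun i => if i ≤ j then 1 else 0 with hχ
    have hsplit : ∀ g : ℕ → ℝ, ∑ i ∈ Finset.Icc 1 k, g i * χ i = ∑ i ∈ Finset.Icc 1 j, g i := by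
      intro g
      rw [← Finset.sum_subset (Finset.Icc_subset_Icc_right hj)
        (by
          intro i hi hni
          have h1 : 1 ≤ i := (Finset.mem_Icc.mp hi).1
          have h2 : i ≤ k := (Finset.mem_Icc.mp hi).2
          have : ¬ i ≤ j := fun h => hni (Finset.mem_Icc.mpr ⟨h1, h⟩)
          simp [hχ, this])]
      refine Finset.sum_congr rfl fun i hi => ?_
      have : i ≤ j := (Finset.mem_Icc.mp hi).2
      simp [hχ, this]
    have hγpos : ∀ i, 1 ≤ i → i ≤ k → i ≤ j → 0 < a i - c * b i := by
      intro i h1 h2 hij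
      have hbi := hb i h1 h2
      have := (lt_div_iff₀ hbi).mp (hc1 i h1 hij)
      linarith
    have hγneg : ∀ i, 1 ≤ i → i ≤ k → j < i → a i - c * b i < 0 := by
      intro i h1 h2 hij
      have hbi := hb i h1 h2
      have := (div_lt_iff₀ hbi).mp (hc2 i hij h2)
      linarith
    have hterm : ∀ w : ℕ → ℝ, (∀ i, 1 ≤ i → i ≤ k → w i ∈ Set.Icc (0:ℝ) 1) →
        ∀ i ∈ Finset.Icc 1 k, (a i - c * b i) * w i ≤ (a i - c * b i) * χ i := by
      intro w hw i hi
      obtain ⟨h1, h2⟩ := Finset.mem_Icc.mp hi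
      obtain ⟨hw0, hw1⟩ := hw i h1 h2
      by_cases hij : i ≤ j
      · have := hγpos i h1 h2 hij
        simp only [hχ, if_pos hij, mul_one]
        nlinarith
      · have := hγneg i h1 h2 (not_le.mp hij)
        simp only [hχ, if_neg hij, mul_zero]
        nlinarith
    have hsum : ∀ w : ℕ → ℝ, (∀ i, 1 ≤ i → i ≤ k → w i ∈ Set.Icc (0:ℝ) 1) →
        ∑ i ∈ Finset.Icc 1 k, (a i - c * b i) * w i ≤ ∑ i ∈ Finset.Icc 1 j, (a i - c * b i) := by
      intro w hw
      calc ∑ i ∈ Finset.Icc 1 k, (a i - c * b i) * w i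
          ≤ ∑ i ∈ Finset.Icc 1 k, (a i - c * b i) * χ i := Finset.sum_le_sum (hterm w hw)
        _ = ∑ i ∈ Finset.Icc 1 j, (a i - c * b i) := hsplit _
    have heqcase : ∀ w : ℕ → ℝ, (∀ i, 1 ≤ i → i ≤ k → w i ∈ Set.Icc (0:ℝ) 1) →
        (∑ i ∈ Finset.Icc 1 k, (a i - c * b i) * w i = ∑ i ∈ Finset.Icc 1 j, (a i - c * b i)) →
        ∀ i ∈ Finset.Icc 1 k, w i = χ i := by
      intro w hw heq i hi
      rw [← hsplit (fun i => a i - c * b i)] at heq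
      have h := (Finset.sum_eq_sum_iff_of_le (hterm w hw)).mp heq i hi
      obtain ⟨h1, h2⟩ := Finset.mem_Icc.mp hi
      have hne : a i - c * b i ≠ 0 := by
        by_cases hij : i ≤ j
        · exact ne_of_gt (hγpos i h1 h2 hij)
        · exact ne_of_lt (hγneg i h1 h2 (not_le.mp hij))
      exact mul_left_cancel₀ hne h
    -- the value of the separating functional
    have hval : ∀ w : ℕ → ℝ,
        (a0 + ∑ i ∈ Finset.Icc 1 k, a i * w i) - c * (b0 + ∑ i ∈ Finset.Icc 1 k, b i * w i)
          = (a0 - c * b0) + ∑ i ∈ Finset.Icc 1 k, (a i - c * b i) * w i := by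
      intro w
      have h1 : ∑ i ∈ Finset.Icc 1 k, (a i - c * b i) * w i
          = ∑ i ∈ Finset.Icc 1 k, a i * w i - c * ∑ i ∈ Finset.Icc 1 k, b i * w i := by
        rw [Finset.mul_sum, ← Finset.sum_sub_distrib]
        exact Finset.sum_congr rfl fun i _ => by ring
      rw [h1]; ring
    -- membership of P_j
    have hχcube : ∀ i, 1 ≤ i → i ≤ k → χ i ∈ Set.Icc (0:ℝ) 1 := by
      intro i _ _
      simp only [hχ]
      split <;> norm_num
    have hπχ : ((a0 + ∑ i ∈ Finset.Icc 1 k, a i * χ i,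
        b0 + ∑ i ∈ Finset.Icc 1 k, b i * χ i) : ℝ × ℝ)
        = (a0 + ∑ i ∈ Finset.Icc 1 j, a i, b0 + ∑ i ∈ Finset.Icc 1 j, b i) := by
      rw [hsplit a, hsplit b]
    rw [mem_extremePoints]
    refine ⟨⟨χ, hχcube, hπχ⟩, ?_⟩
    rintro x₁ ⟨w₁, hw₁, rfl⟩ x₂ ⟨w₂, hw₂, rfl⟩ ⟨t₁, t₂, ht₁, ht₂, hts, heq⟩
    simp only [Set.mem_setOf_eq] at hw₁ hw₂
    have h1 := congrArg Prod.fst heq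
    have h2 := congrArg Prod.snd heq
    simp only [Prod.fst_add, Prod.snd_add, Prod.smul_fst, Prod.smul_snd, smul_eq_mul] at h1 h2
    -- the functional values
    have e1 := hval w₁
    have e2 := hval w₂
    have hS1 := hsum w₁ hw₁
    have hS2 := hsum w₂ hw₂
    -- combination gives equality of functional values
    have hcomb : t₁ * ((a0 - c * b0) + ∑ i ∈ Finset.Icc 1 k, (a i - c * b i) * w₁ i)
        + t₂ * ((a0 - c * b0) + ∑ i ∈ Finset.Icc 1 k, (a i - c * b i) * w₂ i)
        = (a0 + ∑ i ∈ Finset.Icc 1 j, a i) - c * (b0 + ∑ i ∈ Finset.Icc 1 j, b i) := by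
      rw [← e1, ← e2]
      linear_combination h1 - c * h2
    have hG : (a0 + ∑ i ∈ Finset.Icc 1 j, a i) - c * (b0 + ∑ i ∈ Finset.Icc 1 j, b i)
        = (a0 - c * b0) + ∑ i ∈ Finset.Icc 1 j, (a i - c * b i) := by
      rw [Finset.sum_sub_distrib, ← Finset.mul_sum]; ring
    rw [hG] at hcomb
    have hlin : t₁ * (∑ i ∈ Finset.Icc 1 k, (a i - c * b i) * w₁ i)
        + t₂ * (∑ i ∈ Finset.Icc 1 k, (a i - c * b i) * w₂ i)
        = ∑ i ∈ Finset.Icc 1 j, (a i - c * b i) := by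
      linear_combination hcomb - (a0 - c * b0) * hts
    have h5 : t₁ * (∑ i ∈ Finset.Icc 1 j, (a i - c * b i))
        + t₂ * (∑ i ∈ Finset.Icc 1 j, (a i - c * b i))
        = ∑ i ∈ Finset.Icc 1 j, (a i - c * b i) := by
      linear_combination (∑ i ∈ Finset.Icc 1 j, (a i - c * b i)) * hts
    have hF1 : ∑ i ∈ Finset.Icc 1 k, (a i - c * b i) * w₁ i
        = ∑ i ∈ Finset.Icc 1 j, (a i - c * b i) := by
      refine le_antisymm hS1 ?_
      by_contra h
      push_neg at h
      have h3 := mul_lt_mul_of_pos_left h ht₁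
      have h4 := mul_le_mul_of_nonneg_left hS2 ht₂.le
      linarith
    have hF2 : ∑ i ∈ Finset.Icc 1 k, (a i - c * b i) * w₂ i
        = ∑ i ∈ Finset.Icc 1 j, (a i - c * b i) := by
      refine le_antisymm hS2 ?_
      by_contra h
      push_neg at h
      have h3 := mul_lt_mul_of_pos_left h ht₂
      have h4 := mul_le_mul_of_nonneg_left hS1 ht₁.le
      linarith
    have hag1 := heqcase w₁ hw₁ hF1
    have hag2 := heqcase w₂ hw₂ hF2
    constructor
    · rw [← hπχ]
      refine Prod.ext ?_ ?_ <;> simp only <;> congr 1 <;>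
        exact Finset.sum_congr rfl fun i hi => by rw [hag1 i hi]
    · rw [← hπχ]
      refine Prod.ext ?_ ?_ <;> simp only <;> congr 1 <;>
        exact Finset.sum_congr rfl fun i hi => by rw [hag2 i hi]
end

section
/- Fix k ∈ ℕ, vectors a, b ∈ ℝ^k and scalars a₀, b₀ ∈ ℝ with b_i > 0 for every i and a₁/b₁ > a₂/b₂ > … > a_k/b_k; write θ₁(w) = a₀ + Σ_i a_i·w_i and θ₂(w) = b₀ + Σ_i b_i·w_i, and P_j := (a₀ + Σ_{i=1}^j a_i, b₀ + Σ_{i=1}^j b_i) for j = 0,…,k. Let f : ℝ → ℝ be convex. Then there exists j ∈ {0,1,…,k} such that for every w ∈ [0,1]^k, θ₁(w) + f(θ₂(w)) ≤ (P_j)₁ + f((P_j)₂); that is, the maximum of θ₁ + f(θ₂) over the zonogon π([0,1]^k) is attained at one of the right-side vertices P₀, …, P_k. -/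
/-- Every convex function on `ℝ` has a subgradient at every point. -/
lemma exists_subgradient_of_convexOn (f : ℝ → ℝ) (hf : ConvexOn ℝ Set.univ f) (t : ℝ) :
    ∃ c : ℝ, ∀ s : ℝ, f t + c * (s - t) ≤ f s := by
  set S : Set ℝ := (fun x => (f t - f x) / (t - x)) '' Set.Iio t with hS
  have hne : S.Nonempty := ⟨_, ⟨t - 1, by simp, rfl⟩⟩
  have hflip : ∀ x : ℝ, x ≠ t → (f t - f x) / (t - x) = (f x - f t) / (x - t) := by
    intro x hx
    have h1 : t - x ≠ 0 := fun h => hx (by linarith [sub_eq_zero.mp h])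
    have h2 : x - t ≠ 0 := sub_ne_zero.mpr hx
    field_simp
    ring
  have hbdd : BddAbove S := by
    refine ⟨(f (t + 1) - f t) / ((t + 1) - t), ?_⟩
    rintro r ⟨x, hx, rfl⟩
    have hx' : x < t := hx
    have h := hf.secant_mono (a := t) (x := x) (y := t + 1) trivial trivial trivial
      (ne_of_lt hx') (by norm_num) (by linarith)
    show (f t - f x) / (t - x) ≤ (f (t + 1) - f t) / ((t + 1) - t)
    rw [hflip x (ne_of_lt hx')]
    exact h
  refine ⟨sSup S, fun s => ?_⟩
  rcases lt_trichotomy s t with h | h | h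
  · have hmem : (f t - f s) / (t - s) ∈ S := ⟨s, h, rfl⟩
    have hle := le_csSup hbdd hmem
    rw [div_le_iff₀ (by linarith)] at hle
    nlinarith
  · simp [h]
  · have hub : sSup S ≤ (f s - f t) / (s - t) := by
      apply csSup_le hne
      rintro r ⟨x, hx, rfl⟩
      have hx' : x < t := hx
      have h2 := hf.secant_mono (a := t) (x := x) (y := s) trivial trivial trivial
        (ne_of_lt hx') (ne_of_gt h) (by linarith)
      show (f t - f x) / (t - x) ≤ (f s - f t) / (s - t)
      rw [hflip x (ne_of_lt hx')]
      exact h2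
    rw [le_div_iff₀ (by linarith)] at hub
    nlinarith

/-- for a zonogon with sorted positive generators, the maximum of
`θ₁ + f(θ₂)` (with `f` convex) over the hypercube is attained at one of the
right-side vertices `P 0, …, P k`. -/
theorem max_convex_on_zonogon_at_rightside_vertex
    (k : ℕ) (a b : ℕ → ℝ) (a0 b0 : ℝ)
    (hb : ∀ i, 1 ≤ i → i ≤ k → 0 < b i)
    (hsort : ∀ i j, 1 ≤ i → i < j → j ≤ k → a j / b j < a i / b i)
    (f : ℝ → ℝ) (hf : ConvexOn ℝ Set.univ f) :
    ∃ j ≤ k, ∀ w : ℕ → ℝ, (∀ i, 1 ≤ i → i ≤ k → w i ∈ Set.Icc (0 : ℝ) 1) →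
      (a0 + ∑ i ∈ Finset.Icc 1 k, a i * w i)
          + f (b0 + ∑ i ∈ Finset.Icc 1 k, b i * w i)
        ≤ (a0 + ∑ i ∈ Finset.Icc 1 j, a i)
          + f (b0 + ∑ i ∈ Finset.Icc 1 j, b i) := by
  set V : ℕ → ℝ := fun j =>
    (a0 + ∑ i ∈ Finset.Icc 1 j, a i) + f (b0 + ∑ i ∈ Finset.Icc 1 j, b i) with hV
  obtain ⟨j0, hj0mem, hj0max⟩ :=
    Finset.exists_max_image (Finset.range (k + 1)) V ⟨0, by simp⟩
  have hj0k : j0 ≤ k := by have := Finset.mem_range.mp hj0mem; omega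
  refine ⟨j0, hj0k, fun w hw => ?_⟩
  set t : ℝ := b0 + ∑ i ∈ Finset.Icc 1 k, b i * w i with ht
  obtain ⟨c, hc⟩ := exists_subgradient_of_convexOn f hf t
  -- downward closedness of the positive-coefficient set
  have hdc : ∀ i i', 1 ≤ i → i ≤ i' → i' ≤ k → 0 ≤ a i' + c * b i' → 0 ≤ a i + c * b i := by
    intro i i' h1 h2 h3 h4
    rcases eq_or_lt_of_le h2 with rfl | hlt
    · exact h4
    have hbi : 0 < b i := hb i h1 (by omega)
    have hbi' : 0 < b i' := hb i' (by omega) h3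
    have hs := hsort i i' h1 hlt h3
    have h5 : -c ≤ a i' / b i' := by rw [le_div_iff₀ hbi']; nlinarith
    have h6 : -c < a i / b i := lt_of_le_of_lt h5 hs
    have h7 : -c * b i < a i := (lt_div_iff₀ hbi).mp h6
    linarith
  set F := (Finset.Icc 1 k).filter (fun i => 0 ≤ a i + c * b i) with hF
  have hjex : ∃ j ≤ k, ∀ i, 1 ≤ i → i ≤ k → (i ≤ j ↔ 0 ≤ a i + c * b i) := by
    rcases F.eq_empty_or_nonempty with hFe | hFne
    · refine ⟨0, Nat.zero_le k, fun i h1 h2 => ?_⟩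
      constructor
      · omega
      · intro hP
        exfalso
        have : i ∈ F := Finset.mem_filter.mpr ⟨Finset.mem_Icc.mpr ⟨h1, h2⟩, hP⟩
        simp [hFe] at this
    · set j := F.max' hFne with hj
      have hjF : j ∈ F := F.max'_mem hFne
      obtain ⟨hjIcc, hjP⟩ := Finset.mem_filter.mp hjF
      obtain ⟨hj1, hjk⟩ := Finset.mem_Icc.mp hjIcc
      refine ⟨j, hjk, fun i h1 h2 => ?_⟩
      constructor
      · intro hij
        exact hdc i j h1 hij hjk hjP
      · intro hP
        exact F.le_max' i (Finset.mem_filter.mpr ⟨Finset.mem_Icc.mpr ⟨h1, h2⟩, hP⟩)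
  obtain ⟨j, hjk, hiff⟩ := hjex
  -- key linear inequality
  have key : ∑ i ∈ Finset.Icc 1 k, (a i + c * b i) * w i
      ≤ ∑ i ∈ Finset.Icc 1 j, (a i + c * b i) := by
    have hfil : (Finset.Icc 1 k).filter (fun i => i ≤ j) = Finset.Icc 1 j := by
      ext i
      simp only [Finset.mem_filter, Finset.mem_Icc]
      omega
    rw [← hfil, Finset.sum_filter]
    apply Finset.sum_le_sum
    intro i hi
    obtain ⟨h1, h2⟩ := Finset.mem_Icc.mp hi
    obtain ⟨hw0, hw1⟩ := hw i h1 h2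
    by_cases hP : 0 ≤ a i + c * b i
    · rw [if_pos ((hiff i h1 h2).mpr hP)]
      nlinarith
    · rw [if_neg (fun hij => hP ((hiff i h1 h2).mp hij))]
      push_neg at hP
      nlinarith
  have e1 : ∑ i ∈ Finset.Icc 1 k, (a i + c * b i) * w i
      = ∑ i ∈ Finset.Icc 1 k, a i * w i + c * ∑ i ∈ Finset.Icc 1 k, b i * w i := by
    rw [Finset.mul_sum, ← Finset.sum_add_distrib]
    apply Finset.sum_congr rfl
    intros; ring
  have e2 : ∑ i ∈ Finset.Icc 1 j, (a i + c * b i)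
      = ∑ i ∈ Finset.Icc 1 j, a i + c * ∑ i ∈ Finset.Icc 1 j, b i := by
    rw [Finset.mul_sum, ← Finset.sum_add_distrib]
  have hsub := hc (b0 + ∑ i ∈ Finset.Icc 1 j, b i)
  have hVj : (a0 + ∑ i ∈ Finset.Icc 1 k, a i * w i) + f t ≤ V j := by
    simp only [hV]
    rw [e1, e2] at key
    have hd : c * (b0 + ∑ i ∈ Finset.Icc 1 j, b i - t)
        = c * ∑ i ∈ Finset.Icc 1 j, b i - c * ∑ i ∈ Finset.Icc 1 k, b i * w i := by
      rw [ht]; ring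
    rw [hd] at hsub
    linarith
  calc (a0 + ∑ i ∈ Finset.Icc 1 k, a i * w i) + f t ≤ V j := hVj
    _ ≤ V j0 := hj0max j (Finset.mem_range.mpr (by omega))
end

section
/- Fix k ∈ ℕ, vectors a, b ∈ ℝ^k and scalars a₀, b₀ ∈ ℝ with b_i > 0 for every i and a₁/b₁ > a₂/b₂ > … > a_k/b_k; write θ₁(w) = a₀ + Σ_i a_i·w_i and θ₂(w) = b₀ + Σ_i b_i·w_i, and P_j := (a₀ + Σ_{i=1}^j a_i, b₀ + Σ_{i=1}^j b_i). Let c ∈ ℝ and define t := 0 if a₁/b₁ ≤ c, and otherwise t := max{ i ∈ {1,…,k} : a_i/b_i > c }. Then: (i) for every w ∈ [0,1]^k, θ₁(w) − c·θ₂(w) ≤ (P_t)₁ − c·(P_t)₂; and (ii) every w ∈ [0,1]^k attaining equality in (i) satisfies θ₂(w) ≥ (P_t)₂. That is, P_t is the maximizer of θ₁ − c·θ₂ over the zonogon with the smallest θ₂-coordinate. -/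
/-- for a zonogon with sorted positive generators and the index
`t` defined by `t = 0` if `a 1 / b 1 ≤ c` and otherwise
`t = max { i : a i / b i > c }`, the right-side vertex `P t` maximizes
`θ₁ - c·θ₂` over the hypercube, and it is the maximizer with smallest
`θ₂`-coordinate. -/
theorem maximizer_of_theta1_minus_c_theta2
    (k : ℕ) (hk : 1 ≤ k) (a b : ℕ → ℝ) (a0 b0 : ℝ)
    (hb : ∀ i, 1 ≤ i → i ≤ k → 0 < b i)
    (hsort : ∀ i j, 1 ≤ i → i < j → j ≤ k → a j / b j < a i / b i)
    (c : ℝ) (t : ℕ)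
    (ht : (a 1 / b 1 ≤ c ∧ t = 0) ∨
      (c < a 1 / b 1 ∧ 1 ≤ t ∧ t ≤ k ∧ c < a t / b t ∧
        ∀ i, t < i → i ≤ k → a i / b i ≤ c)) :
    (∀ w : ℕ → ℝ, (∀ i, 1 ≤ i → i ≤ k → w i ∈ Set.Icc (0 : ℝ) 1) →
      (a0 + ∑ i ∈ Finset.Icc 1 k, a i * w i)
          - c * (b0 + ∑ i ∈ Finset.Icc 1 k, b i * w i)
        ≤ (a0 + ∑ i ∈ Finset.Icc 1 t, a i)
          - c * (b0 + ∑ i ∈ Finset.Icc 1 t, b i)) ∧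
    (∀ w : ℕ → ℝ, (∀ i, 1 ≤ i → i ≤ k → w i ∈ Set.Icc (0 : ℝ) 1) →
      (a0 + ∑ i ∈ Finset.Icc 1 k, a i * w i)
          - c * (b0 + ∑ i ∈ Finset.Icc 1 k, b i * w i)
        = (a0 + ∑ i ∈ Finset.Icc 1 t, a i)
          - c * (b0 + ∑ i ∈ Finset.Icc 1 t, b i) →
      b0 + ∑ i ∈ Finset.Icc 1 t, b i
        ≤ b0 + ∑ i ∈ Finset.Icc 1 k, b i * w i) := by
  have htk : t ≤ k := by
    rcases ht with ⟨_, rfl⟩ | ⟨_, _, h, _⟩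
    · exact Nat.zero_le k
    · exact h
  have hd_pos : ∀ i, 1 ≤ i → i ≤ t → 0 < a i - c * b i := by
    intro i hi hit
    rcases ht with ⟨_, rfl⟩ | ⟨_, ht1, htk', htc, _⟩
    · omega
    · have hbi := hb i hi (le_trans hit htk')
      have hci : c < a i / b i := by
        rcases eq_or_lt_of_le hit with rfl | hlt
        · exact htc
        · exact lt_trans htc (hsort i t hi hlt htk')
      nlinarith [(lt_div_iff₀ hbi).mp hci]
  have hd_nonpos : ∀ i, t < i → i ≤ k → a i - c * b i ≤ 0 := by
    intro i hti hik
    have hi1 : 1 ≤ i := by omega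
    have hbi := hb i hi1 hik
    have hci : a i / b i ≤ c := by
      rcases ht with ⟨hc, rfl⟩ | ⟨_, _, _, _, hrest⟩
      · rcases eq_or_lt_of_le hi1 with rfl | h1
        · exact hc
        · exact le_trans (le_of_lt (hsort 1 i le_rfl h1 hik)) hc
      · exact hrest i hti hik
    nlinarith [(div_le_iff₀ hbi).mp hci]
  have hsplit : ∀ f : ℕ → ℝ, ∑ i ∈ Finset.Icc 1 k, f i
      = ∑ i ∈ Finset.Icc 1 t, f i + ∑ i ∈ Finset.Icc (t+1) k, f i := by
    intro f
    have h1 : Finset.Icc 1 t = Finset.Ioc 0 t := by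
      rw [← Finset.Icc_add_one_left_eq_Ioc]; rfl
    have h2 : Finset.Icc 1 k = Finset.Ioc 0 k := by
      rw [← Finset.Icc_add_one_left_eq_Ioc]; rfl
    have h3 : Finset.Icc (t+1) k = Finset.Ioc t k := Finset.Icc_add_one_left_eq_Ioc t k
    rw [h1, h2, h3, Finset.sum_Ioc_consecutive f (Nat.zero_le t) htk]
  have hexpand : ∀ w : ℕ → ℝ, ∀ n : ℕ,
      (a0 + ∑ i ∈ Finset.Icc 1 n, a i * w i)
        - c * (b0 + ∑ i ∈ Finset.Icc 1 n, b i * w i)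
      = (a0 - c * b0) + ∑ i ∈ Finset.Icc 1 n, (a i - c * b i) * w i := by
    intro w n
    have h : ∑ i ∈ Finset.Icc 1 n, (a i - c * b i) * w i
        = ∑ i ∈ Finset.Icc 1 n, a i * w i
          - ∑ i ∈ Finset.Icc 1 n, c * (b i * w i) := by
      rw [← Finset.sum_sub_distrib]
      exact Finset.sum_congr rfl (fun i _ => by ring)
    rw [h, ← Finset.mul_sum]
    ring
  have hexpand' :
      (a0 + ∑ i ∈ Finset.Icc 1 t, a i) - c * (b0 + ∑ i ∈ Finset.Icc 1 t, b i)
      = (a0 - c * b0) + ∑ i ∈ Finset.Icc 1 t, (a i - c * b i) := by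
    have h : ∑ i ∈ Finset.Icc 1 t, (a i - c * b i)
        = ∑ i ∈ Finset.Icc 1 t, a i - ∑ i ∈ Finset.Icc 1 t, c * b i := by
      rw [← Finset.sum_sub_distrib]
    rw [h, ← Finset.mul_sum]
    ring
  have hup : ∀ w : ℕ → ℝ, (∀ i, 1 ≤ i → i ≤ k → w i ∈ Set.Icc (0 : ℝ) 1) →
      ∑ i ∈ Finset.Icc 1 t, (a i - c * b i) * w i
        ≤ ∑ i ∈ Finset.Icc 1 t, (a i - c * b i) := by
    intro w hw
    apply Finset.sum_le_sum
    intro i hi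
    rw [Finset.mem_Icc] at hi
    obtain ⟨h0, h1⟩ := hw i hi.1 (le_trans hi.2 htk)
    nlinarith [hd_pos i hi.1 hi.2]
  have hneg : ∀ w : ℕ → ℝ, (∀ i, 1 ≤ i → i ≤ k → w i ∈ Set.Icc (0 : ℝ) 1) →
      ∑ i ∈ Finset.Icc (t+1) k, (a i - c * b i) * w i ≤ 0 := by
    intro w hw
    apply Finset.sum_nonpos
    intro i hi
    rw [Finset.mem_Icc] at hi
    obtain ⟨h0, h1⟩ := hw i (by omega) hi.2
    exact mul_nonpos_of_nonpos_of_nonneg (hd_nonpos i (by omega) hi.2) h0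
  constructor
  · intro w hw
    rw [hexpand w k, hexpand',
      hsplit (fun i => (a i - c * b i) * w i)]
    have := hup w hw
    have := hneg w hw
    linarith
  · intro w hw heq
    rw [hexpand w k, hexpand',
      hsplit (fun i => (a i - c * b i) * w i)] at heq
    have hs1 := hup w hw
    have hs2 := hneg w hw
    have heq1 : ∑ i ∈ Finset.Icc 1 t, (a i - c * b i) * w i
        = ∑ i ∈ Finset.Icc 1 t, (a i - c * b i) := by linarith
    have hz : ∑ i ∈ Finset.Icc 1 t, (a i - c * b i) * (1 - w i) = 0 := by
      have h : ∑ i ∈ Finset.Icc 1 t, (a i - c * b i) * (1 - w i)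
          = ∑ i ∈ Finset.Icc 1 t, (a i - c * b i)
            - ∑ i ∈ Finset.Icc 1 t, (a i - c * b i) * w i := by
        rw [← Finset.sum_sub_distrib]
        exact Finset.sum_congr rfl (fun i _ => by ring)
      rw [h, heq1]; ring
    have hone : ∀ i ∈ Finset.Icc 1 t, w i = 1 := by
      intro i hi
      have hnn : ∀ j ∈ Finset.Icc 1 t, 0 ≤ (a j - c * b j) * (1 - w j) := by
        intro j hj
        rw [Finset.mem_Icc] at hj
        obtain ⟨h0, h1⟩ := hw j hj.1 (le_trans hj.2 htk)
        have := hd_pos j hj.1 hj.2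
        nlinarith
      have hzero := (Finset.sum_eq_zero_iff_of_nonneg hnn).mp hz i hi
      rw [Finset.mem_Icc] at hi
      have hd := hd_pos i hi.1 hi.2
      have h1w : (1 - w i) = 0 := by
        rcases mul_eq_zero.mp hzero with h | h
        · exact absurd h (ne_of_gt hd)
        · exact h
      linarith
    have hbw : ∑ i ∈ Finset.Icc 1 t, b i * w i = ∑ i ∈ Finset.Icc 1 t, b i :=
      Finset.sum_congr rfl (fun i hi => by rw [hone i hi, mul_one])
    have hbw2 : 0 ≤ ∑ i ∈ Finset.Icc (t+1) k, b i * w i := by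
      apply Finset.sum_nonneg
      intro i hi
      rw [Finset.mem_Icc] at hi
      obtain ⟨h0, _⟩ := hw i (by omega) hi.2
      exact mul_nonneg (le_of_lt (hb i (by omega) hi.2)) h0
    rw [hsplit (fun i => b i * w i)]
    rw [← hbw]
    linarith
end

section
/- Fix k ∈ ℕ, vectors a, b ∈ ℝ^k and scalars a₀, b₀ ∈ ℝ with b_i > 0 for every i and a₁/b₁ > a₂/b₂ > … > a_k/b_k; write θ₁(w) = a₀ + Σ_i a_i·w_i and θ₂(w) = b₀ + Σ_i b_i·w_i, and P_j := (a₀ + Σ_{i=1}^j a_i, b₀ + Σ_{i=1}^j b_i) for j = 0,…,k. Let g : ℝ → ℝ be convex, c ≥ 0, L ≤ U reals, let y* be a minimizer of y ↦ c·y + g(y) over ℝ, and set u*(x) := min(U, max(L, y* − x)). Then there exists j ∈ {0,…,k} such that for every w ∈ [0,1]^k: θ₁(w) + c·u*(θ₂(w)) + g( θ₂(w) + u*(θ₂(w)) ) ≤ (P_j)₁ + c·u*((P_j)₂) + g( (P_j)₂ + u*((P_j)₂) ); that is, the worst case of the one-step cost under the optimal (clamped) control law is attained at one of the right-side vertices P₀,…,P_k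 of the zonogon. -/
/-- The clamped control is optimal: for any admissible `u`,
the clamp of `ystar - x` to `[L,U]` does at least as well. -/
lemma clamp_opt_aux (g : ℝ → ℝ) (hg : ConvexOn ℝ Set.univ g)
    (c : ℝ) (L U : ℝ) (hLU : L ≤ U)
    (ystar : ℝ) (hy : ∀ y : ℝ, c * ystar + g ystar ≤ c * y + g y)
    (x u : ℝ) (hLu : L ≤ u) (huU : u ≤ U) :
    c * min U (max L (ystar - x)) + g (x + min U (max L (ystar - x)))
      ≤ c * u + g (x + u) := by
  have hpsi : ConvexOn ℝ Set.univ (fun y => c * y + g y) := by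
    have h1 : ConvexOn ℝ Set.univ (fun y : ℝ => c * y + g y) :=
      ConvexOn.add ⟨convex_univ, by intro p _ q _ s t _ _ _; simp [smul_eq_mul]; ring_nf; rfl⟩ hg
    exact h1
  set v := min U (max L (ystar - x)) with hv
  have key : c * (x + v) + g (x + v) ≤ c * (x + u) + g (x + u) := by
    rcases le_or_gt (ystar - x) L with h1 | h1
    · have hvL : v = L := by rw [hv, max_eq_left h1, min_eq_right hLU]
      have hseg : x + v ∈ segment ℝ ystar (x + u) := by
        rw [segment_eq_Icc (by rw [hvL] at *; linarith)]
        rw [hvL]; exact ⟨by linarith, by linarith⟩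
      have hle := hpsi.le_on_segment (Set.mem_univ ystar) (Set.mem_univ (x + u)) hseg
      have h2 := hy (x + u)
      exact le_trans hle (max_le h2 le_rfl)
    · rcases le_or_gt U (ystar - x) with h2 | h2
      · have hvU : v = U := by
          rw [hv, max_eq_right (by linarith), min_eq_left (by linarith)]
        have hseg : x + v ∈ segment ℝ (x + u) ystar := by
          rw [segment_eq_Icc (by rw [hvU] at *; linarith)]
          rw [hvU]; exact ⟨by linarith, by linarith⟩
        have hle := hpsi.le_on_segment (Set.mem_univ (x + u)) (Set.mem_univ ystar) hseg
        have h3 := hy (x + u)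
        exact le_trans hle (max_le le_rfl h3)
      · have hvy : v = ystar - x := by
          rw [hv, max_eq_right (le_of_lt h1), min_eq_right (le_of_lt h2)]
        rw [hvy, show x + (ystar - x) = ystar by ring]
        exact hy (x + u)
  have e1 : c * (x + v) = c * x + c * v := by ring
  have e2 : c * (x + u) = c * x + c * u := by ring
  linarith

/-- the worst case of the one-step cost
`θ₁ + c·u*(θ₂) + g(θ₂ + u*(θ₂))` under the optimal clamped control law
`u*(x) = min U (max L (y* - x))` is attained at one of the right-side vertices
`P 0, …, P k` of the zonogon. -/
theorem worst_case_under_optimal_control_at_rightside_vertex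
    (k : ℕ) (a b : ℕ → ℝ) (a0 b0 : ℝ)
    (hb : ∀ i, 1 ≤ i → i ≤ k → 0 < b i)
    (hsort : ∀ i j, 1 ≤ i → i < j → j ≤ k → a j / b j < a i / b i)
    (g : ℝ → ℝ) (hg : ConvexOn ℝ Set.univ g)
    (c : ℝ) (hc : 0 ≤ c) (L U : ℝ) (hLU : L ≤ U)
    (ystar : ℝ) (hy : ∀ y : ℝ, c * ystar + g ystar ≤ c * y + g y) :
    ∃ j ≤ k, ∀ w : ℕ → ℝ, (∀ i, 1 ≤ i → i ≤ k → w i ∈ Set.Icc (0 : ℝ) 1) →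
      (a0 + ∑ i ∈ Finset.Icc 1 k, a i * w i)
          + c * min U (max L (ystar - (b0 + ∑ i ∈ Finset.Icc 1 k, b i * w i)))
          + g ((b0 + ∑ i ∈ Finset.Icc 1 k, b i * w i)
              + min U (max L (ystar - (b0 + ∑ i ∈ Finset.Icc 1 k, b i * w i))))
        ≤ (a0 + ∑ i ∈ Finset.Icc 1 j, a i)
          + c * min U (max L (ystar - (b0 + ∑ i ∈ Finset.Icc 1 j, b i)))
          + g ((b0 + ∑ i ∈ Finset.Icc 1 j, b i)
              + min U (max L (ystar - (b0 + ∑ i ∈ Finset.Icc 1 j, b i)))) := by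
  classical
  -- abbreviations
  set H : ℝ → ℝ := fun z =>
    c * min U (max L (ystar - z)) + g (z + min U (max L (ystar - z))) with hHdef
  set S : ℕ → ℝ := fun m => b0 + ∑ i ∈ Finset.Icc 1 m, b i with hSdef
  set A : ℕ → ℝ := fun m => a0 + ∑ i ∈ Finset.Icc 1 m, a i with hAdef
  -- clamp bounds
  have hclL : ∀ z : ℝ, L ≤ min U (max L (ystar - z)) :=
    fun z => le_min hLU (le_max_left _ _)
  have hclU : ∀ z : ℝ, min U (max L (ystar - z)) ≤ U := fun z => min_le_left _ _
  -- convexity-type inequality for H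
  have hHconv : ∀ x y t : ℝ, 0 ≤ t → t ≤ 1 →
      H ((1 - t) * x + t * y) ≤ (1 - t) * H x + t * H y := by
    intro x y t ht0 ht1
    set u1 := min U (max L (ystar - x)) with hu1
    set u2 := min U (max L (ystar - y)) with hu2
    set ub := (1 - t) * u1 + t * u2 with hub
    have h1 : (1 - t) * L ≤ (1 - t) * u1 := mul_le_mul_of_nonneg_left (hclL x) (by linarith)
    have h2 : t * L ≤ t * u2 := mul_le_mul_of_nonneg_left (hclL y) ht0
    have h3 : (1 - t) * u1 ≤ (1 - t) * U := mul_le_mul_of_nonneg_left (hclU x) (by linarith)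
    have h4 : t * u2 ≤ t * U := mul_le_mul_of_nonneg_left (hclU y) ht0
    have hLub : L ≤ ub := by rw [hub]; nlinarith
    have hubU : ub ≤ U := by rw [hub]; nlinarith
    have step1 := clamp_opt_aux g hg c L U hLU ystar hy ((1 - t) * x + t * y) ub hLub hubU
    have step2 : g ((1 - t) * x + t * y + ub) ≤ (1 - t) * g (x + u1) + t * g (y + u2) := by
      have := hg.2 (Set.mem_univ (x + u1)) (Set.mem_univ (y + u2))
        (by linarith : (0:ℝ) ≤ 1 - t) ht0 (by ring)
      simp only [smul_eq_mul] at this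
      have e : (1 - t) * x + t * y + ub = (1 - t) * (x + u1) + t * (y + u2) := by
        rw [hub]; ring
      rw [e]; exact this
    have e2 : c * ub = (1 - t) * (c * u1) + t * (c * u2) := by rw [hub]; ring
    simp only [hHdef, ← hu1, ← hu2]
    have := le_trans step1 (by linarith : c * ub + g ((1 - t) * x + t * y + ub)
        ≤ (1 - t) * (c * u1) + t * (c * u2) + ((1 - t) * g (x + u1) + t * g (y + u2)))
    linarith
  -- trivial case k = 0
  rcases Nat.eq_zero_or_pos k with hk0 | hk1
  · subst hk0
    refine ⟨0, le_rfl, ?_⟩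
    intro w _
    simp
  -- pick the maximizing vertex index
  obtain ⟨j0, hj0mem, hj0max⟩ := Finset.exists_max_image (Finset.range (k + 1))
    (fun m => A m + H (S m)) ⟨0, Finset.mem_range.mpr (Nat.succ_pos k)⟩
  have hj0k : j0 ≤ k := Nat.lt_succ_iff.mp (Finset.mem_range.mp hj0mem)
  refine ⟨j0, hj0k, ?_⟩
  intro w hw
  set x := b0 + ∑ i ∈ Finset.Icc 1 k, b i * w i with hxdef
  -- x is between S 0 and S k
  have hx0 : S 0 ≤ x := by
    simp only [hSdef, hxdef]
    simp only [show Finset.Icc 1 0 = (∅ : Finset ℕ) by simp, Finset.sum_empty]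
    have : (0:ℝ) ≤ ∑ i ∈ Finset.Icc 1 k, b i * w i := by
      apply Finset.sum_nonneg
      intro i hi
      obtain ⟨hi1, hik⟩ := Finset.mem_Icc.mp hi
      exact mul_nonneg (hb i hi1 hik).le ((hw i hi1 hik).1)
    linarith
  have hxk : x ≤ S k := by
    simp only [hSdef, hxdef]
    have : ∑ i ∈ Finset.Icc 1 k, b i * w i ≤ ∑ i ∈ Finset.Icc 1 k, b i := by
      apply Finset.sum_le_sum
      intro i hi
      obtain ⟨hi1, hik⟩ := Finset.mem_Icc.mp hi
      have := (hw i hi1 hik).2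
      nlinarith [hb i hi1 hik]
    linarith
  -- bracket x between consecutive S j, S (j+1)
  have hbracket : ∀ m, 1 ≤ m → m ≤ k → x ≤ S m →
      ∃ j, j + 1 ≤ m ∧ S j ≤ x ∧ x ≤ S (j + 1) := by
    intro m
    induction m with
    | zero => intro h; omega
    | succ n ih =>
      intro _ hmk hxm
      rcases Nat.eq_zero_or_pos n with hn | hn
      · subst hn; exact ⟨0, le_rfl, hx0, hxm⟩
      · rcases le_or_gt x (S n) with hxn | hxn
        · obtain ⟨j, hj1, hj2, hj3⟩ := ih hn (by omega) hxn
          exact ⟨j, by omega, hj2, hj3⟩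
        · exact ⟨n, le_rfl, hxn.le, hxm⟩
  obtain ⟨j, hjk, hSjx, hxSj⟩ := hbracket k hk1 le_rfl hxk
  have hjk' : j ≤ k := by omega
  have hbj : 0 < b (j + 1) := hb (j + 1) (by omega) hjk
  -- the step identities
  have hstepS : S (j + 1) = S j + b (j + 1) := by
    simp only [hSdef]
    rw [Finset.sum_Icc_succ_top (by omega : 1 ≤ j + 1)]
    ring
  have hstepA : A (j + 1) = A j + a (j + 1) := by
    simp only [hAdef]
    rw [Finset.sum_Icc_succ_top (by omega : 1 ≤ j + 1)]
    ring
  set t := (x - S j) / b (j + 1) with htdef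
  have htb : t * b (j + 1) = x - S j := div_mul_cancel₀ _ (ne_of_gt hbj)
  have ht0 : 0 ≤ t := div_nonneg (by linarith) hbj.le
  have ht1 : t ≤ 1 := by
    rw [htdef, div_le_one hbj]; linarith [hstepS]
  have hxt : (1 - t) * S j + t * S (j + 1) = x := by
    rw [hstepS]; linear_combination htb
  -- slope
  set r := a (j + 1) / b (j + 1) with hrdef
  have hr : r * b (j + 1) = a (j + 1) := div_mul_cancel₀ _ (ne_of_gt hbj)
  -- right-boundary bound on θ₁
  have hsplit : ∀ f : ℕ → ℝ, (∑ i ∈ Finset.Icc 1 j, f i) + ∑ i ∈ Finset.Icc (j+1) k, f i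
      = ∑ i ∈ Finset.Icc 1 k, f i := by
    intro f
    have e1 : Finset.Icc 1 j = Finset.Ioc 0 j := by rw [← Finset.Icc_add_one_left_eq_Ioc]; rfl
    have e2 : Finset.Icc (j+1) k = Finset.Ioc j k := by rw [← Finset.Icc_add_one_left_eq_Ioc]
    have e3 : Finset.Icc 1 k = Finset.Ioc 0 k := by rw [← Finset.Icc_add_one_left_eq_Ioc]; rfl
    rw [e1, e2, e3]
    exact Finset.sum_Ioc_consecutive f (Nat.zero_le j) hjk'
  have keyA : ∑ i ∈ Finset.Icc 1 j, (a i - r * b i) * w i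
      ≤ ∑ i ∈ Finset.Icc 1 j, (a i - r * b i) := by
    apply Finset.sum_le_sum
    intro i hi
    obtain ⟨hi1, hij⟩ := Finset.mem_Icc.mp hi
    have hik : i ≤ k := by omega
    have hbi := hb i hi1 hik
    have hs := hsort i (j + 1) hi1 (by omega) hjk
    rw [← hrdef] at hs
    have hra : r * b i < a i := (lt_div_iff₀ hbi).mp hs
    have hwi := hw i hi1 hik
    nlinarith [mul_nonneg (by linarith : (0:ℝ) ≤ a i - r * b i)
      (by linarith [hwi.2] : (0:ℝ) ≤ 1 - w i)]
  have keyB : ∑ i ∈ Finset.Icc (j+1) k, (a i - r * b i) * w i ≤ 0 := by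
    apply Finset.sum_nonpos
    intro i hi
    obtain ⟨hi1, hik⟩ := Finset.mem_Icc.mp hi
    have hbi := hb i (by omega) hik
    have har : a i ≤ r * b i := by
      rcases eq_or_lt_of_le hi1 with h | h
      · rw [← h, hrdef]
        rw [div_mul_cancel₀ _ (ne_of_gt hbj)]
      · have hs := hsort (j + 1) i (by omega) h hik
        rw [← hrdef] at hs
        exact ((div_le_iff₀ hbi).mp hs.le)
    have hwi := hw i (by omega) hik
    exact mul_nonpos_of_nonpos_of_nonneg (by linarith) hwi.1
  have keyAll : ∑ i ∈ Finset.Icc 1 k, (a i - r * b i) * w i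
      ≤ ∑ i ∈ Finset.Icc 1 j, (a i - r * b i) := by
    rw [← hsplit (fun i => (a i - r * b i) * w i)]
    linarith
  have eL : ∑ i ∈ Finset.Icc 1 k, (a i - r * b i) * w i
      = (∑ i ∈ Finset.Icc 1 k, a i * w i) - r * ∑ i ∈ Finset.Icc 1 k, b i * w i := by
    rw [Finset.mul_sum, ← Finset.sum_sub_distrib]
    exact Finset.sum_congr rfl (fun i _ => by ring)
  have eR : ∑ i ∈ Finset.Icc 1 j, (a i - r * b i)
      = (∑ i ∈ Finset.Icc 1 j, a i) - r * ∑ i ∈ Finset.Icc 1 j, b i := by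
    rw [Finset.mul_sum, ← Finset.sum_sub_distrib]
  -- θ₁ bound
  have hrx : r * (x - S j) = t * a (j + 1) := by
    rw [← htb, ← hr]; ring
  have theta1 : a0 + ∑ i ∈ Finset.Icc 1 k, a i * w i ≤ A j + t * a (j + 1) := by
    have h1 : (∑ i ∈ Finset.Icc 1 k, a i * w i) - r * ∑ i ∈ Finset.Icc 1 k, b i * w i
        ≤ (∑ i ∈ Finset.Icc 1 j, a i) - r * ∑ i ∈ Finset.Icc 1 j, b i := by
      rw [← eL, ← eR]; exact keyAll
    have h2 : r * x - r * S j = t * a (j + 1) := by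
      have : r * (x - S j) = r * x - r * S j := by ring
      linarith [hrx]
    have e4 : r * x = r * b0 + r * ∑ i ∈ Finset.Icc 1 k, b i * w i := by
      rw [hxdef]; ring
    have e5 : r * S j = r * b0 + r * ∑ i ∈ Finset.Icc 1 j, b i := by
      simp only [hSdef]; ring
    simp only [hAdef]
    linarith
  -- H bound
  have hHx : H x ≤ (1 - t) * H (S j) + t * H (S (j + 1)) := by
    rw [← hxt]
    exact hHconv (S j) (S (j + 1)) t ht0 ht1
  -- maximality
  have hGj : A j + H (S j) ≤ A j0 + H (S j0) :=
    hj0max j (Finset.mem_range.mpr (by omega))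
  have hGj1 : A (j + 1) + H (S (j + 1)) ≤ A j0 + H (S j0) :=
    hj0max (j + 1) (Finset.mem_range.mpr (by omega))
  -- combine
  have final : (a0 + ∑ i ∈ Finset.Icc 1 k, a i * w i) + H x ≤ A j0 + H (S j0) := by
    have c1 : (1 - t) * (A j + H (S j)) ≤ (1 - t) * (A j0 + H (S j0)) :=
      mul_le_mul_of_nonneg_left hGj (by linarith)
    have c2 : t * (A (j + 1) + H (S (j + 1))) ≤ t * (A j0 + H (S j0)) :=
      mul_le_mul_of_nonneg_left hGj1 ht0
    have hstepA' : t * A (j + 1) = t * A j + t * a (j + 1) := by rw [hstepA]; ring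
    linarith [theta1, hHx, c1, c2, hstepA']
  simp only [hHdef, hSdef, hAdef] at final
  simp only [hxdef] at final
  linarith [final]
end
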